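/- arXiv:0801.3780 — 2 statements merged into one kernel-verified Lean document; each statement's English description precedes it below -/
import Mathlib

section
/- Let ω ∈ Ω be such that T(ω) < +∞. Then: (i) for every n ≥ T(ω), X^{(n)}(ω) ∈ S°; (ii) setting, for n ≥ 1, D_n(ω) = sup{ |1_{[T≤n]}(ω) ln⟨y, X^{(n)}(ω) x⟩ − ln‖Y^{(n)}(ω) y‖| : x, y ∈ B̄ }, one has sup_{n≥1} D_n(ω) < +∞. -/
open MeasureTheory ProbabilityTheory Filter Topology Matrix Finset

noncomputable section

namespace StablePaper

/-- The set of `q × q` matrices. -/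
abbrev Mat (q : ℕ) := Matrix (Fin q) (Fin q) ℝ

instance {q : ℕ} : MeasurableSpace (Mat q) := MeasurableSpace.pi

/-- Membership in the semigroup `S`: nonnegative entries, every row and every
column contains a strictly positive entry. -/
def memS {q : ℕ} (g : Mat q) : Prop :=
  (∀ i j, 0 ≤ g i j) ∧ (∀ i, ∃ j, 0 < g i j) ∧ (∀ j, ∃ i, 0 < g i j)

/-- Membership in `S°`: all entries strictly positive. -/
def memS0 {q : ℕ} (g : Mat q) : Prop := ∀ i j, 0 < g i j

/-- The norm `‖x‖ = ∑ i, |x i|` on `ℝ^q`. -/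
def nrm {q : ℕ} (x : Fin q → ℝ) : ℝ := ∑ i, |x i|

/-- The cone `C̄` of vectors with nonnegative coordinates. -/
def inCbar {q : ℕ} (x : Fin q → ℝ) : Prop := ∀ i, 0 ≤ x i

/-- `B̄`: unit vectors of `C̄`. -/
def inBbar {q : ℕ} (x : Fin q → ℝ) : Prop := inCbar x ∧ nrm x = 1

/-- `B`: unit vectors with strictly positive coordinates. -/
def inB {q : ℕ} (x : Fin q → ℝ) : Prop := (∀ i, 0 < x i) ∧ nrm x = 1

/-- The projective action `g · x = gx / ‖gx‖`. -/
def proj {q : ℕ} (g : Mat q) (x : Fin q → ℝ) : Fin q → ℝ :=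
  fun i => g.mulVec x i / nrm (g.mulVec x)

/-- `m(x,y) = min { x i / y i : y i > 0 }`. -/
def mfun {q : ℕ} (x y : Fin q → ℝ) : ℝ :=
  sInf ((fun i => x i / y i) '' {i | 0 < y i})

/-- The distance `d(x,y) = φ(m(x,y) m(y,x))` with `φ(s) = (1-s)/(1+s)`. -/
def dB {q : ℕ} (x y : Fin q → ℝ) : ℝ :=
  (1 - mfun x y * mfun y x) / (1 + mfun x y * mfun y x)

/-- The cocycle `ξ(g,x) = ln ‖gx‖`. -/
def xi {q : ℕ} (g : Mat q) (x : Fin q → ℝ) : ℝ := Real.log (nrm (g.mulVec x))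

/-- `X^{(n)} = X_n ⋯ X_1` (with `X^{(0)}` the identity matrix). -/
def Xprod {q : ℕ} {Ω : Type} (X : ℕ → Ω → Mat q) : ℕ → Ω → Mat q
  | 0 => fun _ => 1
  | n + 1 => fun ω => X (n + 1) ω * Xprod X n ω

/-- `Y^{(n)} = Y_1 ⋯ Y_n` where `Y_k = X_kᵀ`. -/
def Yprod {q : ℕ} {Ω : Type} (X : ℕ → Ω → Mat q) : ℕ → Ω → Mat q
  | 0 => fun _ => 1
  | n + 1 => fun ω => Yprod X n ω * (X (n + 1) ω)ᵀ

/-- `Ỹ^{(n)} = Y_n ⋯ Y_1` where `Y_k = X_kᵀ`. -/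
def Ytil {q : ℕ} {Ω : Type} (X : ℕ → Ω → Mat q) : ℕ → Ω → Mat q
  | 0 => fun _ => 1
  | n + 1 => fun ω => (X (n + 1) ω)ᵀ * Ytil X n ω

/-- The hitting time `T = inf { n ≥ 1 : X^{(n)} ∈ S° }` (equal to `⊤` if no such `n`). -/
def hitT {q : ℕ} {Ω : Type} (X : ℕ → Ω → Mat q) (ω : Ω) : ℕ∞ :=
  ⨅ (n : ℕ) (_ : 1 ≤ n ∧ memS0 (Xprod X n ω)), (n : ℕ∞)

/-- The indicator `1_{[T ≤ n]}`. -/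
def indT {q : ℕ} {Ω : Type} (X : ℕ → Ω → Mat q) (n : ℕ) (ω : Ω) : ℝ :=
  if hitT X ω ≤ (n : ℕ∞) then 1 else 0

/-- Condition (C). -/
def CondC {q : ℕ} {Ω : Type} [MeasurableSpace Ω] (P : Measure Ω)
    (X : ℕ → Ω → Mat q) : Prop :=
  0 < P {ω | ∃ n, 1 ≤ n ∧ memS0 (Xprod X n ω)}

/-- `(X_n)` is an i.i.d. sequence. -/
def IID {q : ℕ} {Ω : Type} [MeasurableSpace Ω] (P : Measure Ω)
    (X : ℕ → Ω → Mat q) : Prop :=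
  (∀ n, Measurable (X n)) ∧
  iIndepFun X P ∧
  ∀ n, Measure.map (X n) P = Measure.map (X 1) P

/-- `N₁`-functional of a matrix: the sum of all entries. -/
def N1fun {q : ℕ} (g : Mat q) : ℝ := ∑ i, ∑ j, g i j

/-- `V₁`-functional of a matrix: the minimal row sum. -/
def V1fun {q : ℕ} (g : Mat q) : ℝ := sInf {r : ℝ | ∃ i, r = ∑ j, g i j}

/-- The spectral radius of a real matrix (via its complex spectrum). -/
def specRad {q : ℕ} (g : Mat q) : ℝ :=
  (spectralRadius ℂ (g.map (algebraMap ℝ ℂ))).toReal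

/-- A slowly varying function `L : (0,∞) → (0,∞)`. -/
def SlowlyVarying (L : ℝ → ℝ) : Prop :=
  (∀ u : ℝ, 0 < u → 0 < L u) ∧
  ∀ l : ℝ, 0 < l → Tendsto (fun u => L (l * u) / L u) atTop (𝓝 1)

/-- Convolution of two measures on `ℝ`. -/
def mconv (ρ₁ ρ₂ : Measure ℝ) : Measure ℝ :=
  Measure.map (fun p : ℝ × ℝ => p.1 + p.2) (ρ₁.prod ρ₂)

/-- `n`-fold convolution power. -/
def convPow (ρ : Measure ℝ) : ℕ → Measure ℝ
  | 0 => Measure.dirac 0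
  | n + 1 => mconv (convPow ρ n) ρ

/-- A stable law of index `α`: a non-Dirac probability measure `ρ` such that for
every `n ≥ 1` there is `d_n ∈ ℝ` with `ρ^{*n}` equal to the image of `ρ` under
`x ↦ n^{1/α} x + d_n`. -/
def IsStableLaw (α : ℝ) (ρ : Measure ℝ) : Prop :=
  IsProbabilityMeasure ρ ∧ (¬ ∃ c : ℝ, ρ = Measure.dirac c) ∧
  ∀ n : ℕ, 1 ≤ n → ∃ d : ℝ,
    convPow ρ n = Measure.map (fun x => (n : ℝ) ^ (1 / α) * x + d) ρ

/-- Convergence in distribution of real random variables to the law `ρ`. -/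
def ConvInDistrib {Ω : Type} [MeasurableSpace Ω] (P : Measure Ω)
    (Z : ℕ → Ω → ℝ) (ρ : Measure ℝ) : Prop :=
  ∀ f : BoundedContinuousFunction ℝ ℝ,
    Tendsto (fun n => ∫ ω, f (Z n ω) ∂P) atTop (𝓝 (∫ x, f x ∂ρ))

/-- `μ^{(n)}`: the law of `Y^{(n)} = Y_1 ⋯ Y_n`. -/
def muN {q : ℕ} {Ω : Type} [MeasurableSpace Ω] (P : Measure Ω)
    (X : ℕ → Ω → Mat q) (n : ℕ) : Measure (Mat q) :=
  Measure.map (fun ω => Yprod X n ω) P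

/-- The contraction coefficient `c(g)`. -/
def cg {q : ℕ} (g : Mat q) : ℝ :=
  sSup {r : ℝ | ∃ x y, inBbar x ∧ inBbar y ∧ x ≠ y ∧
    r = dB (proj g x) (proj g y) / dB x y}

/-- The coefficient `c(μ^{(n)})`. -/
def cmu {q : ℕ} {Ω : Type} [MeasurableSpace Ω] (P : Measure Ω)
    (X : ℕ → Ω → Mat q) (n : ℕ) : ℝ :=
  sSup {r : ℝ | ∃ y y', inBbar y ∧ inBbar y' ∧ y ≠ y' ∧
    r = ∫ g, dB (proj g y) (proj g y') / dB y y' ∂(muN P X n)}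

/-- `κ(μ) = inf_{n ≥ 1} c(μ^{(n)})^{1/n}`. -/
def kappa {q : ℕ} {Ω : Type} [MeasurableSpace Ω] (P : Measure Ω)
    (X : ℕ → Ω → Mat q) : ℝ :=
  sInf {r : ℝ | ∃ n, 1 ≤ n ∧ r = cmu P X n ^ ((n : ℝ)⁻¹)}

/-- `ν` is `μ`-invariant. -/
def MuInvariant {q : ℕ} (μ : Measure (Mat q)) (ν : Measure (Fin q → ℝ)) : Prop :=
  ∀ f : BoundedContinuousFunction (Fin q → ℝ) ℝ,
    ∫ x, (∫ g, f (proj g x) ∂μ) ∂ν = ∫ x, f x ∂ν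

/-- The Fourier kernels `P_t` (so `P = P_0`). -/
def Ptop {q : ℕ} (μ : Measure (Mat q)) (t : ℝ) (f : (Fin q → ℝ) → ℂ)
    (x : Fin q → ℝ) : ℂ :=
  ∫ g, Complex.exp (Complex.I * (t : ℂ) * (xi g x : ℂ)) * f (proj g x) ∂μ

/-- The sup norm `‖f‖_u` over `B̄`. -/
def supnorm {q : ℕ} (f : (Fin q → ℝ) → ℂ) : ℝ :=
  sSup {r : ℝ | ∃ x, inBbar x ∧ r = ‖f x‖}

/-- The Lipschitz seminorm `m(f)` with respect to the distance `d` on `B̄`. -/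
def mlip {q : ℕ} (f : (Fin q → ℝ) → ℂ) : ℝ :=
  sSup {r : ℝ | ∃ x y, inBbar x ∧ inBbar y ∧ x ≠ y ∧
    r = ‖f x - f y‖ / dB x y}

/-- Membership in the space `L` of `d`-Lipschitz functions on `B̄`. -/
def memL {q : ℕ} (f : (Fin q → ℝ) → ℂ) : Prop :=
  ∃ M : ℝ, ∀ x y, inBbar x → inBbar y → ‖f x - f y‖ ≤ M * dB x y

/-- The norm `‖f‖_L = ‖f‖_u + m(f)`. -/
def normL {q : ℕ} (f : (Fin q → ℝ) → ℂ) : ℝ := supnorm f + mlip f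

/-- `‖g‖ = sup { ‖gx‖ : x ∈ B̄ }`. -/
def opg {q : ℕ} (g : Mat q) : ℝ :=
  sSup {r : ℝ | ∃ x, inBbar x ∧ r = nrm (g.mulVec x)}

/-- `v(g) = inf { ‖gx‖ : x ∈ B̄ }`. -/
def vg {q : ℕ} (g : Mat q) : ℝ :=
  sInf {r : ℝ | ∃ x, inBbar x ∧ r = nrm (g.mulVec x)}

/-- `ℓ(g) = |ln ‖g‖| + |ln v(g)|`. -/
def ellg {q : ℕ} (g : Mat q) : ℝ := |Real.log (opg g)| + |Real.log (vg g)|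

/-- `ε(t) = ∫ min(|t| ℓ(g), 2) dμ(g)`. -/
def epsT {q : ℕ} (μ : Measure (Mat q)) (t : ℝ) : ℝ :=
  ∫ g, min (|t| * ellg g) 2 ∂μ

/-- The operator norm of `P_t - P` on `L`. -/
def opNormDiff {q : ℕ} (μ : Measure (Mat q)) (t : ℝ) : ℝ :=
  sSup {r : ℝ | ∃ f : (Fin q → ℝ) → ℂ, memL f ∧ normL f ≤ 1 ∧
    r = normL (fun x => Ptop μ t f x - Ptop μ 0 f x)}

lemma memS_one {q : ℕ} : memS (1 : Mat q) := by
  refine ⟨fun i j => ?_, fun i => ⟨i, ?_⟩, fun j => ⟨j, ?_⟩⟩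
  · rw [Matrix.one_apply]; split <;> norm_num
  · simp
  · simp

lemma memS_mul {q : ℕ} {A B : Mat q} (hA : memS A) (hB : memS B) : memS (A * B) := by
  obtain ⟨hA0, hAr, hAc⟩ := hA
  obtain ⟨hB0, hBr, hBc⟩ := hB
  refine ⟨fun i j => ?_, fun i => ?_, fun j => ?_⟩
  · rw [Matrix.mul_apply]
    exact Finset.sum_nonneg fun k _ => mul_nonneg (hA0 i k) (hB0 k j)
  · obtain ⟨k, hk⟩ := hAr i
    obtain ⟨j, hj⟩ := hBr k
    refine ⟨j, ?_⟩
    rw [Matrix.mul_apply]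
    exact Finset.sum_pos' (fun l _ => mul_nonneg (hA0 i l) (hB0 l j))
      ⟨k, Finset.mem_univ k, mul_pos hk hj⟩
  · obtain ⟨k, hk⟩ := hBc j
    obtain ⟨i, hi⟩ := hAc k
    refine ⟨i, ?_⟩
    rw [Matrix.mul_apply]
    exact Finset.sum_pos' (fun l _ => mul_nonneg (hA0 i l) (hB0 l j))
      ⟨k, Finset.mem_univ k, mul_pos hi hk⟩

lemma memS_mul_memS0 {q : ℕ} {A B : Mat q} (hA : memS A) (hB : memS0 B) :
    memS0 (A * B) := by
  intro i j
  obtain ⟨k, hk⟩ := hA.2.1 i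
  rw [Matrix.mul_apply]
  exact Finset.sum_pos' (fun l _ => mul_nonneg (hA.1 i l) (hB l j).le)
    ⟨k, Finset.mem_univ k, mul_pos hk (hB k j)⟩

lemma memS_Xprod {q : ℕ} {Ω : Type} {X : ℕ → Ω → Mat q}
    (hS : ∀ n, 1 ≤ n → ∀ ω', memS (X n ω')) (ω : Ω) : ∀ n, memS (Xprod X n ω) := by
  intro n
  induction n with
  | zero => exact memS_one
  | succ n ih => exact memS_mul (hS (n + 1) (by omega) ω) ih

lemma Yprod_eq_transpose {q : ℕ} {Ω : Type} (X : ℕ → Ω → Mat q) (ω : Ω) :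
    ∀ n, Yprod X n ω = (Xprod X n ω)ᵀ := by
  intro n
  induction n with
  | zero => simp [Yprod, Xprod]
  | succ n ih =>
    show Yprod X n ω * (X (n + 1) ω)ᵀ = (X (n + 1) ω * Xprod X n ω)ᵀ
    rw [ih, Matrix.transpose_mul]

lemma sum_eq_one_of_inBbar {q : ℕ} {y : Fin q → ℝ} (hy : inBbar y) : ∑ i, y i = 1 := by
  have h := hy.2
  unfold nrm at h
  rw [← h]
  exact Finset.sum_congr rfl fun i _ => (abs_of_nonneg (hy.1 i)).symm

lemma nrm_transpose_mulVec {q : ℕ} {A : Mat q} (hA0 : ∀ i j, 0 ≤ A i j)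
    {y : Fin q → ℝ} (hy : inCbar y) :
    nrm (Aᵀ.mulVec y) = ∑ k, y k * ∑ j, A k j := by
  have hcomp : ∀ j, Aᵀ.mulVec y j = ∑ k, A k j * y k := fun j => by
    simp [Matrix.mulVec, dotProduct, Matrix.transpose_apply]
  unfold nrm
  calc ∑ j, |Aᵀ.mulVec y j|
      = ∑ j, ∑ k, A k j * y k := by
        refine Finset.sum_congr rfl fun j _ => ?_
        rw [hcomp j]
        exact abs_of_nonneg (Finset.sum_nonneg fun k _ => mul_nonneg (hA0 k j) (hy k))
    _ = ∑ k, y k * ∑ j, A k j := by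
        rw [Finset.sum_comm]
        refine Finset.sum_congr rfl fun k _ => ?_
        rw [Finset.mul_sum]
        exact Finset.sum_congr rfl fun j _ => mul_comm _ _

lemma abs_log_nrm_bound {q : ℕ} (hq : 1 ≤ q) {A : Mat q} (hA : memS A)
    {y : Fin q → ℝ} (hy : inBbar y) :
    |Real.log (nrm (Aᵀ.mulVec y))| ≤
      |Real.log ((univ : Finset (Fin q)).inf' ⟨⟨0, hq⟩, mem_univ _⟩ fun k => ∑ j, A k j)| +
      |Real.log ((univ : Finset (Fin q)).sup' ⟨⟨0, hq⟩, mem_univ _⟩ fun k => ∑ j, A k j)| := by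
  set mn := (univ : Finset (Fin q)).inf' ⟨⟨0, hq⟩, mem_univ _⟩ fun k => ∑ j, A k j with hmn
  set mx := (univ : Finset (Fin q)).sup' ⟨⟨0, hq⟩, mem_univ _⟩ fun k => ∑ j, A k j with hmx
  have hr_pos : ∀ k : Fin q, 0 < ∑ j, A k j := fun k => by
    obtain ⟨j, hj⟩ := hA.2.1 k
    exact Finset.sum_pos' (fun l _ => hA.1 k l) ⟨j, Finset.mem_univ j, hj⟩
  have hmn_pos : 0 < mn := by
    rw [hmn]; refine (Finset.lt_inf'_iff _).2 ?_
    exact fun k _ => hr_pos k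
  have hsy : ∑ i, y i = 1 := sum_eq_one_of_inBbar hy
  rw [nrm_transpose_mulVec hA.1 hy.1]
  have hlb : mn ≤ ∑ k, y k * ∑ j, A k j := by
    calc mn = ∑ k : Fin q, y k * mn := by rw [← Finset.sum_mul, hsy, one_mul]
      _ ≤ ∑ k, y k * ∑ j, A k j :=
        Finset.sum_le_sum fun k _ =>
          mul_le_mul_of_nonneg_left (Finset.inf'_le _ (Finset.mem_univ k)) (hy.1 k)
  have hub : ∑ k, y k * ∑ j, A k j ≤ mx := by
    calc ∑ k, y k * ∑ j, A k j
        ≤ ∑ k : Fin q, y k * mx :=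
          Finset.sum_le_sum fun k _ =>
            mul_le_mul_of_nonneg_left
              (Finset.le_sup' (fun k => ∑ j, A k j) (Finset.mem_univ k)) (hy.1 k)
      _ = mx := by rw [← Finset.sum_mul, hsy, one_mul]
  have hs_pos : 0 < ∑ k, y k * ∑ j, A k j := lt_of_lt_of_le hmn_pos hlb
  have l1 : Real.log mn ≤ Real.log (∑ k, y k * ∑ j, A k j) := Real.log_le_log hmn_pos hlb
  have l2 : Real.log (∑ k, y k * ∑ j, A k j) ≤ Real.log mx := Real.log_le_log hs_pos hub
  rw [abs_le]
  constructor
  · have := neg_abs_le (Real.log mn)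
    have h2 := abs_nonneg (Real.log mx)
    linarith
  · have := le_abs_self (Real.log mx)
    have h2 := abs_nonneg (Real.log mn)
    linarith

/-- **Lemma II.1 (i)-(ii).** If `T(ω) < ∞` then `X^{(n)}(ω) ∈ S°` for all
`n ≥ T(ω)`, and the quantities `D_n(ω)` are uniformly bounded in `n`. -/
theorem statement2 {q : ℕ} (hq : 1 ≤ q) {Ω : Type} (X : ℕ → Ω → Mat q)
    (hS : ∀ n, 1 ≤ n → ∀ ω', memS (X n ω')) (ω : Ω) (hT : hitT X ω < ⊤) :
    (∀ n : ℕ, hitT X ω ≤ (n : ℕ∞) → memS0 (Xprod X n ω)) ∧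
    ∃ M : ℝ, ∀ n : ℕ, 1 ≤ n → ∀ x y : Fin q → ℝ, inBbar x → inBbar y →
      |indT X n ω * Real.log (y ⬝ᵥ (Xprod X n ω).mulVec x)
        - Real.log (nrm ((Yprod X n ω).mulVec y))| ≤ M := by
  classical
  -- extract the (finite) hitting time n₀
  have hne : ∃ n, 1 ≤ n ∧ memS0 (Xprod X n ω) := by
    by_contra h
    rw [not_exists] at h
    have htop : hitT X ω = ⊤ := by
      unfold hitT
      simp only [iInf_eq_top]
      intro n hn
      exact absurd hn (h n)
    rw [htop] at hT
    exact absurd hT (lt_irrefl _)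
  set n₀ := Nat.find hne with hn₀def
  have hspec : 1 ≤ n₀ ∧ memS0 (Xprod X n₀ ω) := Nat.find_spec hne
  have hval : hitT X ω = (n₀ : ℕ∞) := by
    apply le_antisymm
    · unfold hitT
      exact iInf_le_of_le n₀ (iInf_le_of_le hspec le_rfl)
    · unfold hitT
      exact le_iInf₂ fun n hn => by exact_mod_cast Nat.find_min' hne hn
  have hle_iff : ∀ n : ℕ, hitT X ω ≤ (n : ℕ∞) ↔ n₀ ≤ n := fun n => by
    rw [hval, Nat.cast_le]
  -- part (i)
  have key : ∀ n, n₀ ≤ n → memS0 (Xprod X n ω) := by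
    intro n hn
    induction n, hn using Nat.le_induction with
    | base => exact hspec.2
    | succ n hn ih => exact memS_mul_memS0 (hS (n + 1) (by omega) ω) ih
  refine ⟨fun n hn => key n ((hle_iff n).mp hn), ?_⟩
  -- part (ii)
  set A₀ := Xprod X n₀ ω with hA₀def
  have hA₀ : memS0 A₀ := hspec.2
  set a : ℝ := univ.inf' ⟨(⟨0, hq⟩, ⟨0, hq⟩), mem_univ _⟩
    fun p : Fin q × Fin q => A₀ p.1 p.2 with hadef
  set b : ℝ := univ.sup' ⟨(⟨0, hq⟩, ⟨0, hq⟩), mem_univ _⟩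
    fun p : Fin q × Fin q => A₀ p.1 p.2 with hbdef
  have ha_le : ∀ i j, a ≤ A₀ i j := fun i j =>
    Finset.inf'_le (f := fun p : Fin q × Fin q => A₀ p.1 p.2) (mem_univ (i, j))
  have hb_ge : ∀ i j, A₀ i j ≤ b := fun i j =>
    Finset.le_sup' (f := fun p : Fin q × Fin q => A₀ p.1 p.2) (mem_univ (i, j))
  have ha_pos : 0 < a := by
    rw [hadef]; refine (Finset.lt_inf'_iff _).2 ?_
    exact fun p _ => hA₀ p.1 p.2
  have hab : a ≤ b := le_trans (ha_le ⟨0, hq⟩ ⟨0, hq⟩) (hb_ge _ _)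
  have hb_pos : 0 < b := lt_of_lt_of_le ha_pos hab
  set M₁ : ℝ := Real.log (q * b) - Real.log a with hM₁def
  set M₂ : ℝ := ∑ m ∈ Finset.range (n₀ + 1),
    (|Real.log ((univ : Finset (Fin q)).inf' ⟨⟨0, hq⟩, mem_univ _⟩
        fun k => ∑ j, Xprod X m ω k j)| +
     |Real.log ((univ : Finset (Fin q)).sup' ⟨⟨0, hq⟩, mem_univ _⟩
        fun k => ∑ j, Xprod X m ω k j)|) with hM₂def
  -- decomposition for n ≥ n₀
  have hdec : ∀ n, n₀ ≤ n → ∃ C : Mat q, memS C ∧ Xprod X n ω = C * A₀ := by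
    intro n hn
    induction n, hn using Nat.le_induction with
    | base => exact ⟨1, memS_one, (one_mul _).symm⟩
    | succ n hn ih =>
      obtain ⟨C, hC, hCe⟩ := ih
      refine ⟨X (n + 1) ω * C, memS_mul (hS (n + 1) (by omega) ω) hC, ?_⟩
      show X (n + 1) ω * Xprod X n ω = _
      rw [hCe, mul_assoc]
  refine ⟨max M₁ M₂, ?_⟩
  intro n hn1 x y hx hy
  have hsx : ∑ i, x i = 1 := sum_eq_one_of_inBbar hx
  have hsy : ∑ i, y i = 1 := sum_eq_one_of_inBbar hy
  by_cases hcase : n₀ ≤ n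
  · -- indicator equals 1
    have hind : indT X n ω = 1 := by
      unfold indT
      rw [if_pos ((hle_iff n).mpr hcase)]
    obtain ⟨C, hC, hCe⟩ := hdec n hcase
    set w : Fin q → ℝ := fun k => ∑ i, C i k * y i with hwdef
    have hw0 : ∀ k, 0 ≤ w k := fun k =>
      Finset.sum_nonneg fun i _ => mul_nonneg (hC.1 i k) (hy.1 i)
    have hwmv : Cᵀ.mulVec y = w := by
      funext k
      simp [hwdef, Matrix.mulVec, dotProduct, Matrix.transpose_apply]
    have hyi : ∃ i, 0 < y i := by
      by_contra h
      push_neg at h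
      have h0 : ∑ i, y i = 0 :=
        Finset.sum_eq_zero fun i _ => le_antisymm (h i) (hy.1 i)
      rw [hsy] at h0
      exact one_ne_zero h0
    obtain ⟨iy, hiy⟩ := hyi
    set Sw : ℝ := ∑ k, w k with hSwdef
    have hSw : 0 < Sw := by
      obtain ⟨k0, hk0⟩ := hC.2.1 iy
      refine Finset.sum_pos' (fun k _ => hw0 k) ⟨k0, mem_univ k0, ?_⟩
      rw [hwdef]
      exact Finset.sum_pos' (fun i _ => mul_nonneg (hC.1 i k0) (hy.1 i))
        ⟨iy, mem_univ iy, mul_pos hk0 hiy⟩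
    set v : Fin q → ℝ := fun j => ∑ k, A₀ k j * w k with hvdef
    have hv_lb : ∀ j, a * Sw ≤ v j := by
      intro j
      rw [hvdef, hSwdef, Finset.mul_sum]
      exact Finset.sum_le_sum fun k _ => mul_le_mul_of_nonneg_right (ha_le k j) (hw0 k)
    have hv_ub : ∀ j, v j ≤ b * Sw := by
      intro j
      rw [hvdef, hSwdef, Finset.mul_sum]
      exact Finset.sum_le_sum fun k _ => mul_le_mul_of_nonneg_right (hb_ge k j) (hw0 k)
    have haS : 0 < a * Sw := mul_pos ha_pos hSw
    have hbS : 0 < b * Sw := mul_pos hb_pos hSw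
    have hv_pos : ∀ j, 0 < v j := fun j => lt_of_lt_of_le haS (hv_lb j)
    have hAv : (Xprod X n ω)ᵀ.mulVec y = v := by
      rw [hCe, Matrix.transpose_mul, ← Matrix.mulVec_mulVec, hwmv]
      funext j
      simp [hvdef, Matrix.mulVec, dotProduct, Matrix.transpose_apply]
    have hnrmv : nrm ((Yprod X n ω).mulVec y) = ∑ j, v j := by
      rw [Yprod_eq_transpose, hAv]
      unfold nrm
      exact Finset.sum_congr rfl fun j _ => abs_of_nonneg (hv_pos j).le
    have hdot : y ⬝ᵥ (Xprod X n ω).mulVec x = ∑ j, v j * x j := by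
      rw [Matrix.dotProduct_mulVec, ← Matrix.mulVec_transpose, hAv]
      simp [dotProduct]
    have hdot_lb : a * Sw ≤ ∑ j, v j * x j := by
      calc a * Sw = ∑ j, a * Sw * x j := by rw [← Finset.mul_sum, hsx, mul_one]
        _ ≤ ∑ j, v j * x j :=
          Finset.sum_le_sum fun j _ => mul_le_mul_of_nonneg_right (hv_lb j) (hx.1 j)
    have hdot_ub : ∑ j, v j * x j ≤ b * Sw := by
      calc ∑ j, v j * x j ≤ ∑ j, b * Sw * x j :=
          Finset.sum_le_sum fun j _ => mul_le_mul_of_nonneg_right (hv_ub j) (hx.1 j)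
        _ = b * Sw := by rw [← Finset.mul_sum, hsx, mul_one]
    have hq' : (1 : ℝ) ≤ q := by exact_mod_cast hq
    have hdot_ub' : ∑ j, v j * x j ≤ q * (b * Sw) :=
      le_trans hdot_ub (le_mul_of_one_le_left hbS.le hq')
    have hnv_lb : a * Sw ≤ ∑ j, v j := by
      have h1 := Finset.single_le_sum (f := v) (fun j _ => (hv_pos j).le)
        (mem_univ (⟨0, hq⟩ : Fin q))
      linarith [hv_lb (⟨0, hq⟩ : Fin q)]
    have hnv_ub : ∑ j, v j ≤ q * (b * Sw) := by
      calc ∑ j, v j ≤ ∑ _j : Fin q, b * Sw := Finset.sum_le_sum fun j _ => hv_ub j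
        _ = q * (b * Sw) := by
          rw [Finset.sum_const, Finset.card_univ, Fintype.card_fin, nsmul_eq_mul]
    have hqbS : 0 < q * (b * Sw) := by positivity
    have hdot_pos : 0 < ∑ j, v j * x j := lt_of_lt_of_le haS hdot_lb
    have hnv_pos : 0 < ∑ j, v j := lt_of_lt_of_le haS hnv_lb
    have l1 : Real.log (a * Sw) ≤ Real.log (∑ j, v j * x j) := Real.log_le_log haS hdot_lb
    have l2 : Real.log (∑ j, v j * x j) ≤ Real.log (q * (b * Sw)) :=
      Real.log_le_log hdot_pos hdot_ub'
    have l3 : Real.log (a * Sw) ≤ Real.log (∑ j, v j) := Real.log_le_log haS hnv_lb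
    have l4 : Real.log (∑ j, v j) ≤ Real.log (q * (b * Sw)) :=
      Real.log_le_log hnv_pos hnv_ub
    have hqb : (0 : ℝ) < q * b := by positivity
    have e2 : Real.log (q * (b * Sw)) = Real.log (q * b) + Real.log Sw := by
      rw [← mul_assoc, Real.log_mul hqb.ne' hSw.ne']
    have e1 : Real.log (a * Sw) = Real.log a + Real.log Sw :=
      Real.log_mul ha_pos.ne' hSw.ne'
    rw [hind, one_mul, hdot, hnrmv]
    refine le_trans ?_ (le_max_left M₁ M₂)
    rw [abs_sub_le_iff]
    constructor <;> [linarith; linarith]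
  · -- indicator equals 0
    have hind : indT X n ω = 0 := by
      unfold indT
      rw [if_neg]
      intro h
      exact hcase ((hle_iff n).mp h)
    rw [hind, zero_mul, zero_sub, abs_neg, Yprod_eq_transpose]
    refine le_trans ?_ (le_max_right M₁ M₂)
    have hbound := abs_log_nrm_bound hq (memS_Xprod hS ω n) hy
    refine le_trans hbound ?_
    rw [hM₂def]
    exact Finset.single_le_sum
      (f := fun m =>
        |Real.log ((univ : Finset (Fin q)).inf' ⟨⟨0, hq⟩, mem_univ _⟩
            fun k => ∑ j, Xprod X m ω k j)| +
        |Real.log ((univ : Finset (Fin q)).sup' ⟨⟨0, hq⟩, mem_univ _⟩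
            fun k => ∑ j, Xprod X m ω k j)|)
      (fun m _ => add_nonneg (abs_nonneg _) (abs_nonneg _))
      (Finset.mem_range.mpr (by omega))

end StablePaper
end
end

section
/- For every t ∈ ℝ, the Fourier kernel P_t defines a bounded linear operator on the Banach space L, and ‖P_t − P‖_L = O(ε(t) + |t|) as t → 0; more precisely, there is a universal constant C' such that ‖P_t − P‖_L ≤ 4ε(t) + C'|t| for all t ∈ ℝ. -/
open MeasureTheory ProbabilityTheory Filter Topology Matrix Finset

noncomputable section

namespace StablePaper

variable {q : ℕ}

/-! ### Basic facts about `nrm`, `inBbar` -/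

lemma nrm_nonneg (x : Fin q → ℝ) : 0 ≤ nrm x :=
  Finset.sum_nonneg fun i _ => abs_nonneg _

lemma nrm_eq_sum {x : Fin q → ℝ} (hx : ∀ i, 0 ≤ x i) : nrm x = ∑ i, x i :=
  Finset.sum_congr rfl fun i _ => abs_of_nonneg (hx i)

lemma le_nrm {x : Fin q → ℝ} (hx : ∀ i, 0 ≤ x i) (i : Fin q) : x i ≤ nrm x := by
  rw [nrm_eq_sum hx]
  exact Finset.single_le_sum (fun j _ => hx j) (Finset.mem_univ i)

lemma inBbar_exists_pos {x : Fin q → ℝ} (hx : inBbar x) : ∃ i, 0 < x i := by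
  by_contra h
  push_neg at h
  have : ∀ i, x i = 0 := fun i => le_antisymm (h i) (hx.1 i)
  have h0 : nrm x = 0 := by
    simp [nrm, this]
  rw [hx.2] at h0; norm_num at h0

lemma inBbar.q_pos {x : Fin q → ℝ} (hx : inBbar x) : 0 < q := by
  obtain ⟨i, _⟩ := inBbar_exists_pos hx
  exact i.pos

lemma exists_pos_of_nrm_pos {x : Fin q → ℝ} (h : ∀ i, 0 ≤ x i) (hz : 0 < nrm x) :
    ∃ i, 0 < x i := by
  by_contra hc
  push_neg at hc
  have : ∀ i, x i = 0 := fun i => le_antisymm (hc i) (h i)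
  simp [nrm, this] at hz

/-! ### Column sums -/

/-- column sum -/
def colsum (g : Mat q) (j : Fin q) : ℝ := ∑ i, g i j

lemma mulVec_nonneg {g : Mat q} {x : Fin q → ℝ} (hg : ∀ i j, 0 ≤ g i j)
    (hx : inCbar x) (i : Fin q) : 0 ≤ g.mulVec x i := by
  simp only [Matrix.mulVec, dotProduct]
  exact Finset.sum_nonneg fun j _ => mul_nonneg (hg i j) (hx j)

lemma nrm_mulVec_eq {g : Mat q} {x : Fin q → ℝ} (hg : ∀ i j, 0 ≤ g i j)
    (hx : inCbar x) : nrm (g.mulVec x) = ∑ j, colsum g j * x j := by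
  rw [nrm_eq_sum (mulVec_nonneg hg hx)]
  simp only [Matrix.mulVec, dotProduct, colsum, Finset.sum_mul]
  rw [Finset.sum_comm]

lemma colsum_pos {g : Mat q} (hg : memS g) (j : Fin q) : 0 < colsum g j := by
  obtain ⟨i, hi⟩ := hg.2.2 j
  exact lt_of_lt_of_le hi (Finset.single_le_sum (fun i _ => hg.1 i j) (Finset.mem_univ i))

lemma nrm_mulVec_pos {g : Mat q} {x : Fin q → ℝ} (hg : memS g) (hx : inBbar x) :
    0 < nrm (g.mulVec x) := by
  obtain ⟨j, hj⟩ := inBbar_exists_pos hx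
  rw [nrm_mulVec_eq hg.1 hx.1]
  have h1 : 0 < colsum g j * x j := mul_pos (colsum_pos hg j) hj
  have h2 : ∀ j' ∈ Finset.univ, 0 ≤ colsum g j' * x j' := fun j' _ =>
    mul_nonneg (colsum_pos hg j').le (hx.1 j')
  exact lt_of_lt_of_le h1 (Finset.single_le_sum h2 (Finset.mem_univ j))

lemma proj_mem {g : Mat q} {x : Fin q → ℝ} (hg : memS g) (hx : inBbar x) :
    inBbar (proj g x) := by
  have hN := nrm_mulVec_pos hg hx
  constructor
  · intro i
    exact div_nonneg (mulVec_nonneg hg.1 hx.1 i) hN.le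
  · have : ∀ i, 0 ≤ proj g x i := fun i => div_nonneg (mulVec_nonneg hg.1 hx.1 i) hN.le
    rw [nrm_eq_sum this]
    simp only [proj]
    rw [← Finset.sum_div, ← nrm_eq_sum (mulVec_nonneg hg.1 hx.1)]
    field_simp

lemma proj_pos_iff {g : Mat q} {x : Fin q → ℝ} (hg : memS g) (hx : inBbar x) (i : Fin q) :
    0 < proj g x i ↔ 0 < g.mulVec x i := by
  have hN := nrm_mulVec_pos hg hx
  simp only [proj]
  constructor
  · intro h
    by_contra hc
    push_neg at hc
    have := mulVec_nonneg hg.1 hx.1 i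
    have : g.mulVec x i = 0 := le_antisymm hc this
    rw [this] at h; simp at h
  · intro h; exact div_pos h hN

/-! ### `mfun` and `dB` -/

/-- support finset -/
def suppF (y : Fin q → ℝ) : Finset (Fin q) := Finset.univ.filter (fun i => 0 < y i)

lemma mem_suppF {y : Fin q → ℝ} {i : Fin q} : i ∈ suppF y ↔ 0 < y i := by
  simp [suppF]

lemma suppF_nonempty {y : Fin q → ℝ} (h : ∃ i, 0 < y i) : (suppF y).Nonempty := by
  obtain ⟨i, hi⟩ := h
  exact ⟨i, mem_suppF.mpr hi⟩

lemma mfun_eq_inf' {x y : Fin q → ℝ} (h : ∃ i, 0 < y i) :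
    mfun x y = (suppF y).inf' (suppF_nonempty h) (fun i => x i / y i) := by
  rw [Finset.inf'_eq_csInf_image]
  unfold mfun
  congr 1
  congr 1
  ext i
  simp [suppF]

lemma mfun_nonneg {x y : Fin q → ℝ} (hx : inCbar x) (hy : inCbar y)
    (h : ∃ i, 0 < y i) : 0 ≤ mfun x y := by
  rw [mfun_eq_inf' h]
  apply Finset.le_inf'
  intro i hi
  exact div_nonneg (hx i) (hy i)

lemma mfun_mul_le {x y : Fin q → ℝ} (hx : inCbar x) (hy : inCbar y)
    (h : ∃ i, 0 < y i) (i : Fin q) : mfun x y * y i ≤ x i := by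
  by_cases hi : 0 < y i
  · have h1 : mfun x y ≤ x i / y i := by
      rw [mfun_eq_inf' h]
      exact Finset.inf'_le _ (mem_suppF.mpr hi)
    calc mfun x y * y i ≤ (x i / y i) * y i := by
          exact mul_le_mul_of_nonneg_right h1 (hy i)
      _ = x i := by field_simp
  · have : y i = 0 := le_antisymm (not_lt.mp hi) (hy i)
    rw [this, mul_zero]
    exact hx i

lemma mfun_le_one {x y : Fin q → ℝ} (hx : inBbar x) (hy : inBbar y) : mfun x y ≤ 1 := by
  have h := inBbar_exists_pos hy
  have key : mfun x y * nrm y ≤ nrm x := by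
    rw [nrm_eq_sum hx.1, nrm_eq_sum hy.1, Finset.mul_sum]
    exact Finset.sum_le_sum fun i _ => mfun_mul_le hx.1 hy.1 h i
  rw [hx.2, hy.2, mul_one] at key
  exact key

lemma le_mfun {x y : Fin q → ℝ} (h : ∃ i, 0 < y i) {c : ℝ}
    (hc : ∀ i, 0 < y i → c ≤ x i / y i) : c ≤ mfun x y := by
  rw [mfun_eq_inf' h]
  exact Finset.le_inf' _ _ fun i hi => hc i (mem_suppF.mp hi)

lemma sxy_nonneg {x y : Fin q → ℝ} (hx : inBbar x) (hy : inBbar y) :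
    0 ≤ mfun x y * mfun y x :=
  mul_nonneg (mfun_nonneg hx.1 hy.1 (inBbar_exists_pos hy))
    (mfun_nonneg hy.1 hx.1 (inBbar_exists_pos hx))

lemma sxy_le_one {x y : Fin q → ℝ} (hx : inBbar x) (hy : inBbar y) :
    mfun x y * mfun y x ≤ 1 := by
  have h1 := mfun_le_one hx hy
  have h2 := mfun_le_one hy hx
  have h3 := mfun_nonneg hx.1 hy.1 (inBbar_exists_pos hy)
  have h4 := mfun_nonneg hy.1 hx.1 (inBbar_exists_pos hx)
  nlinarith

lemma phi_mono {a b : ℝ} (ha : 0 ≤ a) (hab : a ≤ b) :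
    (1 - b) / (1 + b) ≤ (1 - a) / (1 + a) := by
  have h1 : 0 < 1 + a := by linarith
  have h2 : 0 < 1 + b := by linarith
  rw [div_le_div_iff₀ h2 h1]
  nlinarith

lemma dB_nonneg {x y : Fin q → ℝ} (hx : inBbar x) (hy : inBbar y) : 0 ≤ dB x y := by
  have h1 := sxy_nonneg hx hy
  have h2 := sxy_le_one hx hy
  unfold dB
  apply div_nonneg <;> linarith

lemma dB_le_one {x y : Fin q → ℝ} (hx : inBbar x) (hy : inBbar y) : dB x y ≤ 1 := by
  have h1 := sxy_nonneg hx hy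
  have h2 := sxy_le_one hx hy
  unfold dB
  rw [div_le_one (by linarith)]
  linarith

lemma one_sub_le_two_dB {x y : Fin q → ℝ} (hx : inBbar x) (hy : inBbar y) :
    1 - mfun x y * mfun y x ≤ 2 * dB x y := by
  have h1 := sxy_nonneg hx hy
  have h2 := sxy_le_one hx hy
  have h3 : (0:ℝ) < 1 + mfun x y * mfun y x := by linarith
  unfold dB
  rw [← mul_div_assoc, le_div_iff₀ h3]
  nlinarith

/-! ### `cmax`, `cmin`, `opg`, `vg` -/

section NZ
variable [NeZero q]

/-- max column sum -/
def cmax (g : Mat q) : ℝ := Finset.univ.sup' Finset.univ_nonempty (colsum g)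

/-- min column sum -/
def cmin (g : Mat q) : ℝ := Finset.univ.inf' Finset.univ_nonempty (colsum g)

/-- measurable version of `ellg` -/
def ll (g : Mat q) : ℝ := |Real.log (cmax g)| + |Real.log (cmin g)|

lemma ll_nonneg (g : Mat q) : 0 ≤ ll g := add_nonneg (abs_nonneg _) (abs_nonneg _)

lemma cmin_pos {g : Mat q} (hg : memS g) : 0 < cmin g := by
  rw [cmin, Finset.lt_inf'_iff]
  exact fun j _ => colsum_pos hg j

lemma cmin_le_cmax {g : Mat q} (hg : memS g) : cmin g ≤ cmax g := by
  obtain ⟨j⟩ : Nonempty (Fin q) := inferInstance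
  exact le_trans (Finset.inf'_le _ (Finset.mem_univ j)) (Finset.le_sup' _ (Finset.mem_univ j))

lemma nrm_mulVec_le_cmax {g : Mat q} {x : Fin q → ℝ} (hg : memS g) (hx : inBbar x) :
    nrm (g.mulVec x) ≤ cmax g := by
  rw [nrm_mulVec_eq hg.1 hx.1]
  calc ∑ j, colsum g j * x j ≤ ∑ j, cmax g * x j := by
        refine Finset.sum_le_sum fun j _ => ?_
        exact mul_le_mul_of_nonneg_right (Finset.le_sup' _ (Finset.mem_univ j)) (hx.1 j)
    _ = cmax g * nrm x := by rw [nrm_eq_sum hx.1, Finset.mul_sum]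
    _ = cmax g := by rw [hx.2, mul_one]

lemma cmin_le_nrm_mulVec {g : Mat q} {x : Fin q → ℝ} (hg : memS g) (hx : inBbar x) :
    cmin g ≤ nrm (g.mulVec x) := by
  rw [nrm_mulVec_eq hg.1 hx.1]
  calc cmin g = cmin g * nrm x := by rw [hx.2, mul_one]
    _ = ∑ j, cmin g * x j := by rw [nrm_eq_sum hx.1, Finset.mul_sum]
    _ ≤ ∑ j, colsum g j * x j := by
        refine Finset.sum_le_sum fun j _ => ?_
        exact mul_le_mul_of_nonneg_right (Finset.inf'_le _ (Finset.mem_univ j)) (hx.1 j)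

/-- basis vector -/
def e1 (j : Fin q) : Fin q → ℝ := fun i => if i = j then 1 else 0

lemma e1_mem (j : Fin q) : inBbar (e1 (q := q) j) := by
  constructor
  · intro i; unfold e1; split <;> norm_num
  · unfold nrm e1
    rw [Finset.sum_eq_single j] <;> simp +contextual

lemma nrm_mulVec_e1 (g : Mat q) (j : Fin q) (hg : ∀ i j, 0 ≤ g i j) :
    nrm (g.mulVec (e1 j)) = colsum g j := by
  rw [nrm_mulVec_eq hg (e1_mem j).1]
  rw [Finset.sum_eq_single j] <;> simp +contextual [e1]

lemma opg_eq_cmax {g : Mat q} (hg : memS g) : opg g = cmax g := by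
  apply le_antisymm
  · apply Real.sSup_le
    · rintro r ⟨x, hx, rfl⟩
      exact nrm_mulVec_le_cmax hg hx
    · obtain ⟨j⟩ : Nonempty (Fin q) := inferInstance
      exact le_trans (cmin_pos hg).le (cmin_le_cmax hg)
  · obtain ⟨j, hj⟩ := Finset.exists_mem_eq_sup' (Finset.univ_nonempty (α := Fin q)) (colsum g)
    apply le_csSup
    · exact ⟨cmax g, by rintro r ⟨x, hx, rfl⟩; exact nrm_mulVec_le_cmax hg hx⟩
    · exact ⟨e1 j, e1_mem j, by rw [nrm_mulVec_e1 g j hg.1, cmax, hj.2]⟩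

lemma vg_eq_cmin {g : Mat q} (hg : memS g) : vg g = cmin g := by
  apply le_antisymm
  · obtain ⟨j, hj⟩ := Finset.exists_mem_eq_inf' (Finset.univ_nonempty (α := Fin q)) (colsum g)
    apply csInf_le
    · exact ⟨cmin g, by rintro r ⟨x, hx, rfl⟩; exact cmin_le_nrm_mulVec hg hx⟩
    · exact ⟨e1 j, e1_mem j, by rw [nrm_mulVec_e1 g j hg.1, cmin, hj.2]⟩
  · apply le_csInf
    · exact ⟨nrm (g.mulVec (e1 (Classical.arbitrary (Fin q)))), e1 _, e1_mem _, rfl⟩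
    · rintro r ⟨x, hx, rfl⟩
      exact cmin_le_nrm_mulVec hg hx

lemma ellg_eq_ll {g : Mat q} (hg : memS g) : ellg g = ll g := by
  rw [ellg, opg_eq_cmax hg, vg_eq_cmin hg, ll]

lemma ellg_nonneg (g : Mat q) : 0 ≤ ellg g := add_nonneg (abs_nonneg _) (abs_nonneg _)

lemma abs_xi_le_ll {g : Mat q} {x : Fin q → ℝ} (hg : memS g) (hx : inBbar x) :
    |xi g x| ≤ ll g := by
  have h1 := cmin_le_nrm_mulVec hg hx
  have h2 := nrm_mulVec_le_cmax hg hx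
  have h3 := cmin_pos hg
  have hlog1 : Real.log (cmin g) ≤ xi g x := Real.log_le_log h3 h1
  have hlog2 : xi g x ≤ Real.log (cmax g) := Real.log_le_log (lt_of_lt_of_le h3 h1) h2
  rw [ll]
  rw [abs_le]
  constructor
  · have := neg_abs_le (Real.log (cmin g))
    nlinarith [abs_nonneg (Real.log (cmax g))]
  · have := le_abs_self (Real.log (cmax g))
    nlinarith [abs_nonneg (Real.log (cmin g))]

end NZ
/-! ### Cocycle comparison and contraction -/

lemma mfun_nrm_mulVec_le {g : Mat q} {x y : Fin q → ℝ} (hg : ∀ i j, 0 ≤ g i j)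
    (hx : inBbar x) (hy : inBbar y) :
    mfun x y * nrm (g.mulVec y) ≤ nrm (g.mulVec x) := by
  have hm := mfun_nonneg hx.1 hy.1 (inBbar_exists_pos hy)
  have hcomp : ∀ i, mfun x y * g.mulVec y i ≤ g.mulVec x i := by
    intro i
    simp only [Matrix.mulVec, dotProduct, Finset.mul_sum]
    refine Finset.sum_le_sum fun j _ => ?_
    calc mfun x y * (g i j * y j) = g i j * (mfun x y * y j) := by ring
      _ ≤ g i j * x j := mul_le_mul_of_nonneg_left
          (mfun_mul_le hx.1 hy.1 (inBbar_exists_pos hy) j) (hg i j)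
  rw [nrm_eq_sum (mulVec_nonneg hg hx.1), nrm_eq_sum (mulVec_nonneg hg hy.1), Finset.mul_sum]
  exact Finset.sum_le_sum fun i _ => hcomp i

lemma sxy_le_sxy_proj {g : Mat q} {x y : Fin q → ℝ} (hg : memS g)
    (hx : inBbar x) (hy : inBbar y) :
    mfun x y * mfun y x ≤ mfun (proj g x) (proj g y) * mfun (proj g y) (proj g x) := by
  have hNx := nrm_mulVec_pos hg hx
  have hNy := nrm_mulVec_pos hg hy
  have hpx := proj_mem hg hx
  have hpy := proj_mem hg hy
  have hmx := mfun_nonneg hx.1 hy.1 (inBbar_exists_pos hy)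
  have hmy := mfun_nonneg hy.1 hx.1 (inBbar_exists_pos hx)
  set Nx := nrm (g.mulVec x)
  set Ny := nrm (g.mulVec y)
  have key : ∀ (u v : Fin q → ℝ) (hu : inBbar u) (hv : inBbar v),
      mfun u v * (nrm (g.mulVec v) / nrm (g.mulVec u)) ≤ mfun (proj g u) (proj g v) := by
    intro u v hu hv
    have hNu := nrm_mulVec_pos hg hu
    have hNv := nrm_mulVec_pos hg hv
    apply le_mfun (inBbar_exists_pos (proj_mem hg hv))
    intro i hi
    have hvi : 0 < g.mulVec v i := (proj_pos_iff hg hv i).mp hi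
    have hcomp : mfun u v * g.mulVec v i ≤ g.mulVec u i := by
      simp only [Matrix.mulVec, dotProduct, Finset.mul_sum]
      refine Finset.sum_le_sum fun j _ => ?_
      calc mfun u v * (g i j * v j) = g i j * (mfun u v * v j) := by ring
        _ ≤ g i j * u j := mul_le_mul_of_nonneg_left
            (mfun_mul_le hu.1 hv.1 (inBbar_exists_pos hv) j) (hg.1 i j)
    have hui := mulVec_nonneg hg.1 hu.1 i
    simp only [proj]
    have hEq : (g.mulVec u i / nrm (g.mulVec u)) / (g.mulVec v i / nrm (g.mulVec v)) =
        (g.mulVec u i * nrm (g.mulVec v)) / (nrm (g.mulVec u) * g.mulVec v i) := by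
      field_simp
    rw [hEq, le_div_iff₀ (by positivity)]
    have hEq2 : mfun u v * (nrm (g.mulVec v) / nrm (g.mulVec u)) *
        (nrm (g.mulVec u) * g.mulVec v i) = (mfun u v * g.mulVec v i) * nrm (g.mulVec v) := by
      field_simp
    rw [hEq2]
    exact mul_le_mul_of_nonneg_right hcomp hNv.le
  have k1 := key x y hx hy
  have k2 := key y x hy hx
  have h1 : 0 ≤ mfun x y * (Ny / Nx) := by positivity
  have h2 : 0 ≤ mfun y x * (Nx / Ny) := by positivity
  calc mfun x y * mfun y x = (mfun x y * (Ny / Nx)) * (mfun y x * (Nx / Ny)) := by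
        field_simp
    _ ≤ mfun (proj g x) (proj g y) * mfun (proj g y) (proj g x) := by
        apply mul_le_mul k1 k2 h2 (le_trans h1 k1)

lemma dB_proj_le {g : Mat q} {x y : Fin q → ℝ} (hg : memS g)
    (hx : inBbar x) (hy : inBbar y) :
    dB (proj g x) (proj g y) ≤ dB x y := by
  unfold dB
  exact phi_mono (sxy_nonneg hx hy) (sxy_le_sxy_proj hg hx hy)

section NZ2
variable [NeZero q]

lemma abs_xi_sub_le {g : Mat q} {x y : Fin q → ℝ} (hg : memS g)
    (hx : inBbar x) (hy : inBbar y) (hmx : 0 < mfun x y) (hmy : 0 < mfun y x) :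
    |xi g x - xi g y| ≤ -Real.log (mfun x y * mfun y x) := by
  have hNx := nrm_mulVec_pos hg hx
  have hNy := nrm_mulVec_pos hg hy
  have k1 : Real.log (mfun x y) + Real.log (nrm (g.mulVec y)) ≤ xi g x := by
    rw [← Real.log_mul hmx.ne' hNy.ne']
    exact Real.log_le_log (by positivity) (mfun_nrm_mulVec_le hg.1 hx hy)
  have k2 : Real.log (mfun y x) + Real.log (nrm (g.mulVec x)) ≤ xi g y := by
    rw [← Real.log_mul hmy.ne' hNx.ne']
    exact Real.log_le_log (by positivity) (mfun_nrm_mulVec_le hg.1 hy hx)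
  have hl1 : Real.log (mfun x y) ≤ 0 := Real.log_nonpos hmx.le (mfun_le_one hx hy)
  have hl2 : Real.log (mfun y x) ≤ 0 := Real.log_nonpos hmy.le (mfun_le_one hy hx)
  rw [Real.log_mul hmx.ne' hmy.ne']
  unfold xi at *
  rw [abs_le]
  constructor <;> nlinarith

/-- The key inequality combining the two regimes. -/
lemma key_min {g : Mat q} {x y : Fin q → ℝ} (hg : memS g)
    (hx : inBbar x) (hy : inBbar y) (t : ℝ) :
    min (|t| * |xi g x - xi g y|) 2 ≤
      3 * min (|t| * ll g) 2 * dB x y + 10 * |t| * dB x y := by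
  have hs0 := sxy_nonneg hx hy
  have hs1 := sxy_le_one hx hy
  have hd0 := dB_nonneg hx hy
  have hmin0 : 0 ≤ min (|t| * ll g) 2 := le_min (mul_nonneg (abs_nonneg t) (ll_nonneg g)) (by norm_num)
  by_cases hs : 1/5 ≤ mfun x y * mfun y x
  · set s := mfun x y * mfun y x with hsdef
    have hmx : 0 < mfun x y := by
      by_contra hc
      push_neg at hc
      have := mfun_nonneg hy.1 hx.1 (inBbar_exists_pos hx)
      nlinarith
    have hmy : 0 < mfun y x := by
      by_contra hc
      push_neg at hc
      have := mfun_nonneg hx.1 hy.1 (inBbar_exists_pos hy)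
      nlinarith
    have hxis := abs_xi_sub_le hg hx hy hmx hmy
    have hspos : 0 < s := by linarith
    have hlog : -Real.log s ≤ 5 * (1 - s) := by
      have h1 := Real.log_le_sub_one_of_pos (show 0 < s⁻¹ by positivity)
      rw [Real.log_inv] at h1
      have h3 : s * s⁻¹ = 1 := mul_inv_cancel₀ hspos.ne'
      nlinarith
    have h2d := one_sub_le_two_dB hx hy
    calc min (|t| * |xi g x - xi g y|) 2 ≤ |t| * |xi g x - xi g y| := min_le_left _ _
      _ ≤ |t| * (5 * (1 - s)) := by
          apply mul_le_mul_of_nonneg_left (le_trans hxis hlog) (abs_nonneg t)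
      _ ≤ |t| * (10 * dB x y) := by
          apply mul_le_mul_of_nonneg_left (by linarith) (abs_nonneg t)
      _ = 10 * |t| * dB x y := by ring
      _ ≤ 3 * min (|t| * ll g) 2 * dB x y + 10 * |t| * dB x y := by nlinarith
  · push_neg at hs
    have hd23 : 2/3 ≤ dB x y := by
      have := phi_mono hs0 hs.le
      norm_num at this
      unfold dB
      linarith
    have hxix := abs_xi_le_ll hg hx
    have hxiy := abs_xi_le_ll hg hy
    have habs : |xi g x - xi g y| ≤ 2 * ll g := by
      have := abs_sub (xi g x) (xi g y)
      calc |xi g x - xi g y| ≤ |xi g x| + |xi g y| := abs_sub _ _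
        _ ≤ 2 * ll g := by linarith
    have step1 : min (|t| * |xi g x - xi g y|) 2 ≤ 2 * min (|t| * ll g) 2 := by
      rcases le_or_gt (|t| * ll g) 2 with h | h
      · rw [min_eq_left h]
        calc min (|t| * |xi g x - xi g y|) 2 ≤ |t| * |xi g x - xi g y| := min_le_left _ _
          _ ≤ |t| * (2 * ll g) := mul_le_mul_of_nonneg_left habs (abs_nonneg t)
          _ = 2 * (|t| * ll g) := by ring
      · rw [min_eq_right h.le]
        calc min (|t| * |xi g x - xi g y|) 2 ≤ 2 := min_le_right _ _
          _ ≤ 2 * 2 := by norm_num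
    calc min (|t| * |xi g x - xi g y|) 2 ≤ 2 * min (|t| * ll g) 2 := step1
      _ ≤ 3 * min (|t| * ll g) 2 * dB x y := by nlinarith
      _ ≤ 3 * min (|t| * ll g) 2 * dB x y + 10 * |t| * dB x y := by
          nlinarith [abs_nonneg t, hd0]

end NZ2
/-! ### Complex exponential estimates -/

lemma abs_expI_sub_one (θ : ℝ) :
    ‖Complex.exp ((θ:ℂ) * Complex.I) - 1‖ ≤ min |θ| 2 := by
  have h2 : ‖Complex.exp ((θ:ℂ) * Complex.I) - 1‖ ≤ 2 := by
    calc ‖Complex.exp ((θ:ℂ) * Complex.I) - 1‖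
        ≤ ‖Complex.exp ((θ:ℂ) * Complex.I)‖ + ‖1‖ :=
          norm_sub_le _ _
      _ = 2 := by rw [Complex.norm_exp_ofReal_mul_I]; simp; norm_num
  have h1 : ‖Complex.exp ((θ:ℂ) * Complex.I) - 1‖ ≤ |θ| := by
    rw [Complex.exp_mul_I]
    rw [show Complex.cos (θ:ℂ) + Complex.sin (θ:ℂ) * Complex.I - 1 =
      ((Real.cos θ - 1 : ℝ):ℂ) + ((Real.sin θ : ℝ):ℂ) * Complex.I by
        push_cast [Complex.ofReal_cos, Complex.ofReal_sin]; ring]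
    rw [Complex.norm_add_mul_I]
    have hcos : (Real.cos θ - 1)^2 + (Real.sin θ)^2 = 2 - 2 * Real.cos θ := by
      have := Real.sin_sq_add_cos_sq θ
      ring_nf
      nlinarith
    rw [hcos]
    have hhalf : 2 - 2 * Real.cos θ = (2 * |Real.sin (θ/2)|)^2 := by
      have := Real.abs_sin_half θ
      have h0 : (0:ℝ) ≤ (1 - Real.cos θ)/2 := by nlinarith [Real.cos_le_one θ]
      have := Real.sq_sqrt h0
      nlinarith [Real.abs_sin_half θ, Real.sqrt_nonneg ((1 - Real.cos θ)/2)]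
    rw [hhalf, Real.sqrt_sq (by positivity)]
    calc 2 * |Real.sin (θ/2)| ≤ 2 * |θ/2| := by
          linarith [Real.abs_sin_le_abs (x := θ/2)]
      _ = |θ| := by rw [abs_div]; norm_num; ring
  exact le_min h1 h2

lemma abs_expI_sub_expI (a b : ℝ) :
    ‖Complex.exp ((a:ℂ) * Complex.I) - Complex.exp ((b:ℂ) * Complex.I)‖ ≤
      min |a - b| 2 := by
  have key : Complex.exp ((a:ℂ) * Complex.I) - Complex.exp ((b:ℂ) * Complex.I) =
      Complex.exp ((b:ℂ) * Complex.I) * (Complex.exp (((a - b : ℝ):ℂ) * Complex.I) - 1) := by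
    rw [mul_sub, mul_one, ← Complex.exp_add]
    push_cast
    ring_nf
  rw [key, norm_mul, Complex.norm_exp_ofReal_mul_I, one_mul]
  exact abs_expI_sub_one (a - b)

lemma exp_xi_eq (t : ℝ) (g : Mat q) (x : Fin q → ℝ) :
    Complex.exp (Complex.I * (t:ℂ) * ((xi g x : ℝ):ℂ)) =
      Complex.exp (((t * xi g x : ℝ):ℂ) * Complex.I) := by
  push_cast
  ring_nf

lemma abs_exp_xi (t : ℝ) (g : Mat q) (x : Fin q → ℝ) :
    ‖Complex.exp (Complex.I * (t:ℂ) * ((xi g x : ℝ):ℂ))‖ = 1 := by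
  rw [exp_xi_eq]
  exact Complex.norm_exp_ofReal_mul_I _

/-! ### Facts about `supnorm` and `mlip` -/

lemma memL_bound {f : (Fin q → ℝ) → ℂ} (hf : memL f) :
    ∃ M : ℝ, 0 ≤ M ∧ ∀ x y, inBbar x → inBbar y → ‖f x - f y‖ ≤ M * dB x y := by
  obtain ⟨M, hM⟩ := hf
  refine ⟨max M 0, le_max_right _ _, fun x y hx hy => ?_⟩
  calc ‖f x - f y‖ ≤ M * dB x y := hM x y hx hy
    _ ≤ max M 0 * dB x y := mul_le_mul_of_nonneg_right (le_max_left _ _) (dB_nonneg hx hy)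

lemma supnorm_bddAbove {f : (Fin q → ℝ) → ℂ} (hf : memL f) (hq : 0 < q) :
    BddAbove {r : ℝ | ∃ x, inBbar x ∧ r = ‖f x‖} := by
  haveI : NeZero q := ⟨hq.ne'⟩
  obtain ⟨M, hM0, hM⟩ := memL_bound hf
  set x0 : Fin q → ℝ := e1 ⟨0, hq⟩
  have hx0 : inBbar x0 := e1_mem _
  refine ⟨‖f x0‖ + M, ?_⟩
  rintro r ⟨x, hx, rfl⟩
  calc ‖f x‖ = ‖(f x - f x0) + f x0‖ := by ring_nf
    _ ≤ ‖f x - f x0‖ + ‖f x0‖ := norm_add_le _ _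
    _ ≤ M * dB x x0 + ‖f x0‖ := by
        linarith [hM x x0 hx hx0]
    _ ≤ M * 1 + ‖f x0‖ := by
        have := dB_le_one hx hx0
        nlinarith
    _ = ‖f x0‖ + M := by ring

lemma abs_f_le_supnorm {f : (Fin q → ℝ) → ℂ} (hf : memL f) {z : Fin q → ℝ}
    (hz : inBbar z) : ‖f z‖ ≤ supnorm f :=
  le_csSup (supnorm_bddAbove hf hz.q_pos) ⟨z, hz, rfl⟩

lemma supnorm_nonneg (f : (Fin q → ℝ) → ℂ) : 0 ≤ supnorm f := by
  apply Real.sSup_nonneg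
  rintro r ⟨x, hx, rfl⟩
  exact norm_nonneg _

lemma mlip_nonneg (f : (Fin q → ℝ) → ℂ) : 0 ≤ mlip f := by
  apply Real.sSup_nonneg
  rintro r ⟨x, y, hx, hy, hxy, rfl⟩
  exact div_nonneg (norm_nonneg _) (dB_nonneg hx hy)

lemma abs_f_sub_le_mlip {f : (Fin q → ℝ) → ℂ} (hf : memL f) {u v : Fin q → ℝ}
    (hu : inBbar u) (hv : inBbar v) :
    ‖f u - f v‖ ≤ mlip f * dB u v := by
  obtain ⟨M, hM0, hM⟩ := memL_bound hf
  by_cases huv : u = v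
  · subst huv
    simp only [sub_self, norm_zero]
    exact mul_nonneg (mlip_nonneg f) (dB_nonneg hu hv)
  by_cases hd : dB u v = 0
  · have := hM u v hu hv
    rw [hd, mul_zero] at this
    rw [hd, mul_zero]
    exact this
  · have hdpos : 0 < dB u v := lt_of_le_of_ne (dB_nonneg hu hv) (Ne.symm hd)
    have hmem : ‖f u - f v‖ / dB u v ∈
        {r : ℝ | ∃ x y, inBbar x ∧ inBbar y ∧ x ≠ y ∧
          r = ‖f x - f y‖ / dB x y} := ⟨u, v, hu, hv, huv, rfl⟩
    have hbdd : BddAbove {r : ℝ | ∃ x y, inBbar x ∧ inBbar y ∧ x ≠ y ∧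
        r = ‖f x - f y‖ / dB x y} := by
      refine ⟨M, ?_⟩
      rintro r ⟨x, y, hx, hy, hxy, rfl⟩
      by_cases hd2 : dB x y = 0
      · rw [hd2, div_zero]; exact hM0
      · have hd2pos : 0 < dB x y := lt_of_le_of_ne (dB_nonneg hx hy) (Ne.symm hd2)
        rw [div_le_iff₀ hd2pos]
        exact hM x y hx hy
    have : ‖f u - f v‖ / dB u v ≤ mlip f := le_csSup hbdd hmem
    rw [div_le_iff₀ hdpos] at this
    linarith
/-! ### Measurability infrastructure -/

instance matBorel {q : ℕ} : BorelSpace (Mat q) := Pi.borelSpace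

lemma measurable_entry (i j : Fin q) : Measurable fun g : Mat q => g i j :=
  (measurable_pi_apply j).comp (measurable_pi_apply (X := fun _ : Fin q => Fin q → ℝ) i)

lemma continuous_entry (i j : Fin q) : Continuous fun g : Mat q => g i j :=
  (continuous_apply j).comp (continuous_apply (A := fun _ : Fin q => Fin q → ℝ) i)

lemma measurable_mulVec_apply (x : Fin q → ℝ) (i : Fin q) :
    Measurable fun g : Mat q => g.mulVec x i := by
  simp only [Matrix.mulVec, dotProduct]
  exact Finset.measurable_sum _ fun j _ => (measurable_entry i j).mul_const (x j)

lemma continuous_mulVec_apply (x : Fin q → ℝ) (i : Fin q) :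
    Continuous fun g : Mat q => g.mulVec x i := by
  simp only [Matrix.mulVec, dotProduct]
  exact continuous_finset_sum _ fun j _ => (continuous_entry i j).mul continuous_const

lemma continuous_nrm_mulVec (x : Fin q → ℝ) :
    Continuous fun g : Mat q => nrm (g.mulVec x) := by
  unfold nrm
  exact continuous_finset_sum _ fun i _ => (continuous_mulVec_apply x i).abs

lemma measurable_nrm_mulVec (x : Fin q → ℝ) :
    Measurable fun g : Mat q => nrm (g.mulVec x) :=
  (continuous_nrm_mulVec x).measurable

lemma measurable_xi (x : Fin q → ℝ) : Measurable fun g : Mat q => xi g x :=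
  Real.measurable_log.comp (measurable_nrm_mulVec x)

lemma measurable_finset_sup' {ι : Type*} {α : Type*} [MeasurableSpace α]
    (F : ι → α → ℝ) (hF : ∀ i, Measurable (F i)) (s : Finset ι) :
    ∀ (hs : s.Nonempty), Measurable (fun a => s.sup' hs fun i => F i a) := by
  induction s using Finset.cons_induction with
  | empty => intro hs; exact absurd hs Finset.not_nonempty_empty
  | cons a s ha ih =>
    intro hs
    rcases s.eq_empty_or_nonempty with rfl | hs'
    · simpa using hF a
    · have heq : (fun x => (Finset.cons a s ha).sup' hs fun i => F i x) =
        fun x => max (F a x) (s.sup' hs' fun i => F i x) := by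
        funext x
        rw [Finset.sup'_cons hs']
      rw [heq]
      exact (hF a).max (ih hs')

lemma measurable_finset_inf' {ι : Type*} {α : Type*} [MeasurableSpace α]
    (F : ι → α → ℝ) (hF : ∀ i, Measurable (F i)) (s : Finset ι) :
    ∀ (hs : s.Nonempty), Measurable (fun a => s.inf' hs fun i => F i a) := by
  induction s using Finset.cons_induction with
  | empty => intro hs; exact absurd hs Finset.not_nonempty_empty
  | cons a s ha ih =>
    intro hs
    rcases s.eq_empty_or_nonempty with rfl | hs'
    · simpa using hF a
    · have heq : (fun x => (Finset.cons a s ha).inf' hs fun i => F i x) =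
        fun x => min (F a x) (s.inf' hs' fun i => F i x) := by
        funext x
        rw [Finset.inf'_cons hs']
      rw [heq]
      exact (hF a).min (ih hs')

lemma cwa_finset_inf' {α : Type*} [TopologicalSpace α] {A : Set α} {a : α}
    {ι : Type*} (F : ι → α → ℝ) (s : Finset ι)
    (hF : ∀ i ∈ s, ContinuousWithinAt (F i) A a) :
    ∀ (hs : s.Nonempty), ContinuousWithinAt (fun x => s.inf' hs fun i => F i x) A a := by
  induction s using Finset.cons_induction with
  | empty => intro hs; exact absurd hs Finset.not_nonempty_empty
  | cons b s hb ih =>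
    intro hs
    rcases s.eq_empty_or_nonempty with rfl | hs'
    · simpa using hF b (Finset.mem_cons_self b _)
    · have heq : (fun x => (Finset.cons b s hb).inf' hs fun i => F i x) =
        fun x => min (F b x) (s.inf' hs' fun i => F i x) := by
        funext x
        rw [Finset.inf'_cons hs']
      rw [heq]
      exact ContinuousWithinAt.inf (hF b (Finset.mem_cons_self b _))
        (ih (fun i hi => hF i (Finset.mem_cons_of_mem hi)) hs')

section NZ3
variable [NeZero q]

lemma measurable_ll : Measurable (ll (q := q)) := by
  have hc : ∀ j, Measurable fun g : Mat q => colsum g j := fun j =>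
    Finset.measurable_sum _ fun i _ => measurable_entry i j
  have h1 : Measurable (cmax (q := q)) :=
    measurable_finset_sup' _ hc Finset.univ Finset.univ_nonempty
  have h2 : Measurable (cmin (q := q)) :=
    measurable_finset_inf' _ hc Finset.univ Finset.univ_nonempty
  exact ((Real.measurable_log.comp h1).abs).add ((Real.measurable_log.comp h2).abs)

end NZ3

lemma measurableSet_memS : MeasurableSet {g : Mat q | memS g} := by
  have h1 : MeasurableSet {g : Mat q | ∀ i j, 0 ≤ g i j} := by
    rw [show {g : Mat q | ∀ i j, 0 ≤ g i j} = ⋂ i, ⋂ j, {g : Mat q | 0 ≤ g i j} by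
      ext g; simp]
    exact MeasurableSet.iInter fun i => MeasurableSet.iInter fun j =>
      measurableSet_le measurable_const (measurable_entry i j)
  have h2 : MeasurableSet {g : Mat q | ∀ i, ∃ j, 0 < g i j} := by
    rw [show {g : Mat q | ∀ i, ∃ j, 0 < g i j} = ⋂ i, ⋃ j, {g : Mat q | 0 < g i j} by
      ext g; simp]
    exact MeasurableSet.iInter fun i => MeasurableSet.iUnion fun j =>
      measurableSet_lt measurable_const (measurable_entry i j)
  have h3 : MeasurableSet {g : Mat q | ∀ j, ∃ i, 0 < g i j} := by
    rw [show {g : Mat q | ∀ j, ∃ i, 0 < g i j} = ⋂ j, ⋃ i, {g : Mat q | 0 < g i j} by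
      ext g; simp]
    exact MeasurableSet.iInter fun j => MeasurableSet.iUnion fun i =>
      measurableSet_lt measurable_const (measurable_entry i j)
  have : {g : Mat q | memS g} = {g : Mat q | ∀ i j, 0 ≤ g i j} ∩
      ({g : Mat q | ∀ i, ∃ j, 0 < g i j} ∩ {g : Mat q | ∀ j, ∃ i, 0 < g i j}) := by
    ext g; simp [memS, Set.mem_inter_iff]
  rw [this]
  exact h1.inter (h2.inter h3)
/-! ### A.e. strong measurability of the kernel integrand -/

/-- Pieces of `S` according to the support of `g x`. -/
def pieceR (x : Fin q → ℝ) (R : Finset (Fin q)) : Set (Mat q) :=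
  {g | memS g ∧ ∀ i, (0 < g.mulVec x i ↔ i ∈ R)}

lemma measurableSet_pieceR (x : Fin q → ℝ) (R : Finset (Fin q)) :
    MeasurableSet (pieceR x R) := by
  have : pieceR x R = {g : Mat q | memS g} ∩ ⋂ i, {g : Mat q | 0 < g.mulVec x i ↔ i ∈ R} := by
    ext g; simp [pieceR]
  rw [this]
  refine measurableSet_memS.inter (MeasurableSet.iInter fun i => ?_)
  by_cases hi : i ∈ R
  · have : {g : Mat q | 0 < g.mulVec x i ↔ i ∈ R} = {g : Mat q | 0 < g.mulVec x i} := by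
      ext g; simp [hi]
    rw [this]
    exact measurableSet_lt measurable_const (measurable_mulVec_apply x i)
  · have : {g : Mat q | 0 < g.mulVec x i ↔ i ∈ R} = {g : Mat q | 0 < g.mulVec x i}ᶜ := by
      ext g; simp [hi]
    rw [this]
    exact (measurableSet_lt measurable_const (measurable_mulVec_apply x i)).compl

lemma continuousOn_piece {f : (Fin q → ℝ) → ℂ} (hf : memL f) {x : Fin q → ℝ}
    (hx : inBbar x) (R : Finset (Fin q)) :
    ContinuousOn (fun g : Mat q => f (proj g x)) (pieceR x R) := by
  intro g0 hg0
  obtain ⟨hg0S, hg0R⟩ := hg0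
  have hN0 : 0 < nrm (g0.mulVec x) := nrm_mulVec_pos hg0S hx
  set v := proj g0 x with hv
  have hvB : inBbar v := proj_mem hg0S hx
  have hvpos : ∀ i, 0 < v i ↔ i ∈ R := fun i => (proj_pos_iff hg0S hx i).trans (hg0R i)
  have hRne : ∃ i, 0 < v i := inBbar_exists_pos hvB
  have hψ : ∀ i, ContinuousWithinAt (fun g : Mat q => proj g x i) (pieceR x R) g0 := by
    intro i
    apply ContinuousWithinAt.div
    · exact (continuous_mulVec_apply x i).continuousWithinAt
    · exact (continuous_nrm_mulVec x).continuousWithinAt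
    · exact hN0.ne'
  set Rf := suppF v with hRf
  have hRfne : Rf.Nonempty := suppF_nonempty hRne
  have hsupp : ∀ g ∈ pieceR x R, suppF (proj g x) = Rf := by
    intro g hg
    ext i
    rw [mem_suppF, hRf, mem_suppF, proj_pos_iff hg.1 hx, hg.2 i]
    exact (hvpos i).symm
  set S : Mat q → ℝ := fun g => (Rf.inf' hRfne fun i => proj g x i / v i) *
    (Rf.inf' hRfne fun i => v i / proj g x i) with hSdef
  have hSeq : ∀ g ∈ pieceR x R, mfun (proj g x) v * mfun v (proj g x) = S g := by
    intro g hg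
    have hgB := proj_mem hg.1 hx
    rw [mfun_eq_inf' hRne, mfun_eq_inf' (inBbar_exists_pos hgB)]
    show _ = (Rf.inf' hRfne fun i => proj g x i / v i) *
      (Rf.inf' hRfne fun i => v i / proj g x i)
    congr 1
    exact Finset.inf'_congr (suppF_nonempty (inBbar_exists_pos hgB)) (hsupp g hg)
      (fun i _ => rfl)
  have hvne : ∀ i ∈ Rf, v i ≠ 0 := fun i hi => (mem_suppF.mp hi).ne'
  have e1' : (Rf.inf' hRfne fun i => proj g0 x i / v i) = 1 := by
    rw [Finset.inf'_congr hRfne rfl (fun i hi => div_self (hvne i hi))]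
    exact Finset.inf'_const _ _
  have e2' : (Rf.inf' hRfne fun i => v i / proj g0 x i) = 1 := by
    rw [Finset.inf'_congr hRfne rfl (fun i hi => div_self (hvne i hi))]
    exact Finset.inf'_const _ _
  have hS0 : S g0 = 1 := by
    show (Rf.inf' hRfne fun i => proj g0 x i / v i) *
      (Rf.inf' hRfne fun i => v i / proj g0 x i) = 1
    rw [e1']
    norm_num [e2']
  have hScwa : ContinuousWithinAt S (pieceR x R) g0 := by
    apply ContinuousWithinAt.mul
    · exact cwa_finset_inf' _ Rf (fun i _ => (hψ i).div continuousWithinAt_const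
        (fun h => (hvne i ‹i ∈ Rf› h).elim) |>.mono (Set.Subset.refl _)) hRfne
    · exact cwa_finset_inf' _ Rf (fun i hi => ContinuousWithinAt.div
        continuousWithinAt_const (hψ i) (hvne i hi)) hRfne
  have hdcwa : ContinuousWithinAt (fun g => (1 - S g) / (1 + S g)) (pieceR x R) g0 := by
    apply ContinuousWithinAt.div
    · exact continuousWithinAt_const.sub hScwa
    · exact continuousWithinAt_const.add hScwa
    · rw [hS0]; norm_num
  obtain ⟨M, hM0, hM⟩ := memL_bound hf
  have hflip : Tendsto (fun g => f (proj g x) - f v) (𝓝[pieceR x R] g0) (𝓝 0) := by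
    apply squeeze_zero_norm' (a := fun g => M * ((1 - S g) / (1 + S g)))
    · filter_upwards [self_mem_nhdsWithin] with g hg
      have h1 : ‖f (proj g x) - f v‖ ≤ M * dB (proj g x) v :=
        hM _ _ (proj_mem hg.1 hx) hvB
      have h2 : dB (proj g x) v = (1 - S g) / (1 + S g) := by
        rw [dB, hSeq g hg]
      rw [← h2]
      exact h1
    · have h3 : Tendsto (fun g => (1 - S g) / (1 + S g)) (𝓝[pieceR x R] g0)
          (𝓝 ((1 - S g0) / (1 + S g0))) := hdcwa
      have h5 : (1 - S g0) / (1 + S g0) = 0 := by rw [hS0]; norm_num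
      rw [h5] at h3
      have h6 := h3.const_mul M
      simpa using h6
  have : Tendsto (fun g => f (proj g x)) (𝓝[pieceR x R] g0) (𝓝 (f v)) := by
    have h4 := hflip.add (tendsto_const_nhds (x := f v))
    simpa using h4
  exact this

lemma ae_memS {μ : Measure (Mat q)} [IsProbabilityMeasure μ]
    (hS : μ {g : Mat q | memS g} = 1) : ∀ᵐ g ∂μ, memS g := by
  rw [MeasureTheory.ae_iff]
  have : {g : Mat q | ¬ memS g} = {g : Mat q | memS g}ᶜ := rfl
  rw [this, measure_compl measurableSet_memS (measure_ne_top μ _), hS]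
  simp

lemma aesm_comp {f : (Fin q → ℝ) → ℂ} (hf : memL f) {x : Fin q → ℝ} (hx : inBbar x)
    {μ : Measure (Mat q)} [IsProbabilityMeasure μ] (hS : μ {g : Mat q | memS g} = 1) :
    AEStronglyMeasurable (fun g : Mat q => f (proj g x)) μ := by
  have hsub : {g : Mat q | memS g} ⊆ ⋃ R : Finset (Fin q), pieceR x R := by
    intro g hg
    exact Set.mem_iUnion.mpr ⟨suppF (g.mulVec x), hg, fun i => (mem_suppF (i := i)).symm⟩
  have hae : ∀ᵐ g ∂μ, g ∈ ⋃ R : Finset (Fin q), pieceR x R := by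
    filter_upwards [ae_memS hS] with g hg using hsub hg
  have h1 : AEStronglyMeasurable (fun g : Mat q => f (proj g x))
      (μ.restrict (⋃ R : Finset (Fin q), pieceR x R)) :=
    aestronglyMeasurable_iUnion_iff.mpr fun R =>
      (continuousOn_piece hf hx R).aestronglyMeasurable (measurableSet_pieceR x R)
  rwa [Measure.restrict_eq_self_of_ae_mem hae] at h1

lemma measurable_expfactor (t : ℝ) (x : Fin q → ℝ) :
    Measurable fun g : Mat q => Complex.exp (Complex.I * (t:ℂ) * ((xi g x : ℝ):ℂ)) :=
  Complex.measurable_exp.comp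
    ((Complex.measurable_ofReal.comp (measurable_xi x)).const_mul (Complex.I * t))

lemma integrable_kernel {μ : Measure (Mat q)} [IsProbabilityMeasure μ]
    (hS : μ {g : Mat q | memS g} = 1) {f : (Fin q → ℝ) → ℂ} (hf : memL f)
    {x : Fin q → ℝ} (hx : inBbar x) (t : ℝ) :
    Integrable (fun g : Mat q =>
      Complex.exp (Complex.I * (t:ℂ) * ((xi g x : ℝ):ℂ)) * f (proj g x)) μ := by
  have hmeas : AEStronglyMeasurable (fun g : Mat q =>
      Complex.exp (Complex.I * (t:ℂ) * ((xi g x : ℝ):ℂ)) * f (proj g x)) μ :=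
    (measurable_expfactor t x).aestronglyMeasurable.mul (aesm_comp hf hx hS)
  apply Integrable.mono' (integrable_const (supnorm f)) hmeas
  filter_upwards [ae_memS hS] with g hg
  rw [norm_mul, abs_exp_xi, one_mul]
  exact abs_f_le_supnorm hf (proj_mem hg hx)
/-! ### Integral estimates -/

/-- the exponential factor -/
def Efac (t : ℝ) (g : Mat q) (x : Fin q → ℝ) : ℂ :=
  Complex.exp (Complex.I * (t:ℂ) * ((xi g x : ℝ):ℂ))

lemma Efac_zero (g : Mat q) (x : Fin q → ℝ) : Efac 0 g x = 1 := by
  simp [Efac]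

lemma Ptop_eq (μ : Measure (Mat q)) (t : ℝ) (f : (Fin q → ℝ) → ℂ) (x : Fin q → ℝ) :
    Ptop μ t f x = ∫ g, Efac t g x * f (proj g x) ∂μ := rfl

section NZ4
variable [NeZero q]

lemma abs_Efac_sub_one {g : Mat q} (hg : memS g) {x : Fin q → ℝ} (hx : inBbar x) (t : ℝ) :
    ‖Efac t g x - 1‖ ≤ min (|t| * ll g) 2 := by
  rw [Efac, exp_xi_eq]
  refine (abs_expI_sub_one (t * xi g x)).trans ?_
  rw [abs_mul]
  exact min_le_min (mul_le_mul_of_nonneg_left (abs_xi_le_ll hg hx) (abs_nonneg t)) le_rfl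

lemma abs_Efac_sub_Efac (t : ℝ) (g : Mat q) (x y : Fin q → ℝ) :
    ‖Efac t g x - Efac t g y‖ ≤ min (|t| * |xi g x - xi g y|) 2 := by
  rw [Efac, Efac, exp_xi_eq, exp_xi_eq]
  refine (abs_expI_sub_expI (t * xi g x) (t * xi g y)).trans ?_
  have : t * xi g x - t * xi g y = t * (xi g x - xi g y) := by ring
  rw [this, abs_mul]

variable {μ : Measure (Mat q)} [IsProbabilityMeasure μ]

lemma epsT_eq (hS : μ {g : Mat q | memS g} = 1) (t : ℝ) :
    epsT μ t = ∫ g, min (|t| * ll g) 2 ∂μ := by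
  apply integral_congr_ae
  filter_upwards [ae_memS hS] with g hg
  rw [ellg_eq_ll hg]

lemma epsT_nonneg (t : ℝ) : 0 ≤ epsT μ t :=
  integral_nonneg fun g => le_min (mul_nonneg (abs_nonneg t) (ellg_nonneg g)) zero_le_two

lemma integrable_minll (t : ℝ) : Integrable (fun g : Mat q => min (|t| * ll g) 2) μ := by
  apply Integrable.mono' (integrable_const 2)
    ((measurable_ll.const_mul |t|).min measurable_const).aestronglyMeasurable
  filter_upwards with g
  rw [Real.norm_eq_abs, abs_of_nonneg (le_min (mul_nonneg (abs_nonneg t) (ll_nonneg g))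
    zero_le_two)]
  exact min_le_right _ _

lemma integrable_kernel' (hS : μ {g : Mat q | memS g} = 1) {f : (Fin q → ℝ) → ℂ}
    (hf : memL f) {x : Fin q → ℝ} (hx : inBbar x) (t : ℝ) :
    Integrable (fun g : Mat q => Efac t g x * f (proj g x)) μ :=
  integrable_kernel hS hf hx t

lemma sup_bound (hS : μ {g : Mat q | memS g} = 1) {f : (Fin q → ℝ) → ℂ}
    (hf : memL f) {x : Fin q → ℝ} (hx : inBbar x) (t : ℝ) :
    ‖Ptop μ t f x - Ptop μ 0 f x‖ ≤ supnorm f * epsT μ t := by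
  have h1 := integrable_kernel' hS hf hx t
  have h0 := integrable_kernel' hS hf hx 0
  rw [Ptop_eq, Ptop_eq, ← integral_sub h1 h0]
  calc ‖∫ g, (Efac t g x * f (proj g x) - Efac 0 g x * f (proj g x)) ∂μ‖
      ≤ ∫ g, ‖Efac t g x * f (proj g x) - Efac 0 g x * f (proj g x)‖ ∂μ :=
        norm_integral_le_integral_norm _
    _ ≤ ∫ g, supnorm f * min (|t| * ll g) 2 ∂μ := by
        apply integral_mono_of_nonneg
        · filter_upwards with g using norm_nonneg _
        · exact (integrable_minll t).const_mul _
        · filter_upwards [ae_memS hS] with g hg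
          rw [Efac_zero, one_mul]
          have hre : Efac t g x * f (proj g x) - f (proj g x) =
              (Efac t g x - 1) * f (proj g x) := by ring
          rw [hre, norm_mul]
          calc ‖Efac t g x - 1‖ * ‖f (proj g x)‖
              ≤ min (|t| * ll g) 2 * supnorm f := by
                apply mul_le_mul (abs_Efac_sub_one hg hx t)
                  (abs_f_le_supnorm hf (proj_mem hg hx)) (norm_nonneg _)
                exact le_min (mul_nonneg (abs_nonneg t) (ll_nonneg g)) zero_le_two
            _ = supnorm f * min (|t| * ll g) 2 := by ring
    _ = supnorm f * epsT μ t := by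
        rw [integral_const_mul, ← epsT_eq hS]

lemma diff_bound (hS : μ {g : Mat q | memS g} = 1) {f : (Fin q → ℝ) → ℂ}
    (hf : memL f) (t : ℝ) {x y : Fin q → ℝ} (hx : inBbar x) (hy : inBbar y) :
    ‖(Ptop μ t f x - Ptop μ 0 f x) - (Ptop μ t f y - Ptop μ 0 f y)‖ ≤
      ((3 * supnorm f + mlip f) * epsT μ t + 10 * |t| * supnorm f) * dB x y := by
  have hx1 := integrable_kernel' hS hf hx t
  have hx0 := integrable_kernel' hS hf hx 0
  have hy1 := integrable_kernel' hS hf hy t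
  have hy0 := integrable_kernel' hS hf hy 0
  set Fu := supnorm f
  set Mf := mlip f
  set d := dB x y with hd
  have hFu : 0 ≤ Fu := supnorm_nonneg f
  have hMf : 0 ≤ Mf := mlip_nonneg f
  have hd0 : 0 ≤ d := dB_nonneg hx hy
  have hIX : Integrable (fun g : Mat q =>
      Efac t g x * f (proj g x) - Efac 0 g x * f (proj g x)) μ := hx1.sub hx0
  have hIY : Integrable (fun g : Mat q =>
      Efac t g y * f (proj g y) - Efac 0 g y * f (proj g y)) μ := hy1.sub hy0
  have hsub : ∫ g, ((Efac t g x * f (proj g x) - Efac 0 g x * f (proj g x)) -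
      (Efac t g y * f (proj g y) - Efac 0 g y * f (proj g y))) ∂μ =
      ∫ g, (Efac t g x * f (proj g x) - Efac 0 g x * f (proj g x)) ∂μ -
      ∫ g, (Efac t g y * f (proj g y) - Efac 0 g y * f (proj g y)) ∂μ :=
    integral_sub hIX hIY
  rw [Ptop_eq, Ptop_eq, Ptop_eq, Ptop_eq, ← integral_sub hx1 hx0, ← integral_sub hy1 hy0,
    ← hsub]
  calc ‖∫ g, ((Efac t g x * f (proj g x) - Efac 0 g x * f (proj g x)) -
        (Efac t g y * f (proj g y) - Efac 0 g y * f (proj g y))) ∂μ‖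
      ≤ ∫ g, ‖(Efac t g x * f (proj g x) - Efac 0 g x * f (proj g x)) -
        (Efac t g y * f (proj g y) - Efac 0 g y * f (proj g y))‖ ∂μ :=
        norm_integral_le_integral_norm _
    _ ≤ ∫ g, ((3 * Fu * d + Mf * d) * min (|t| * ll g) 2 + 10 * |t| * Fu * d) ∂μ := by
        apply integral_mono_of_nonneg
        · filter_upwards with g using norm_nonneg _
        · exact ((integrable_minll t).const_mul _).add (integrable_const _)
        · filter_upwards [ae_memS hS] with g hg
          have hpx := proj_mem hg hx
          have hpy := proj_mem hg hy
          set A := Efac t g x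
          set B := Efac t g y
          set u := f (proj g x)
          set w := f (proj g y)
          have hdec : (A * u - Efac 0 g x * u) - (B * w - Efac 0 g y * w) =
              (A - B) * u + (B - 1) * (u - w) := by
            rw [Efac_zero, Efac_zero]
            ring
          rw [hdec]
          have habsu : ‖u‖ ≤ Fu := abs_f_le_supnorm hf hpx
          have habsuw : ‖u - w‖ ≤ Mf * dB (proj g x) (proj g y) :=
            abs_f_sub_le_mlip hf hpx hpy
          have hAB : ‖A - B‖ ≤ min (|t| * |xi g x - xi g y|) 2 :=
            abs_Efac_sub_Efac t g x y
          have hB1 : ‖B - 1‖ ≤ min (|t| * ll g) 2 := abs_Efac_sub_one hg hy t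
          have hkey := key_min hg hx hy t
          have hcontr : dB (proj g x) (proj g y) ≤ d := dB_proj_le hg hx hy
          have hmin0 : (0:ℝ) ≤ min (|t| * ll g) 2 :=
            le_min (mul_nonneg (abs_nonneg t) (ll_nonneg g)) zero_le_two
          have hmin0' : (0:ℝ) ≤ min (|t| * |xi g x - xi g y|) 2 :=
            le_min (mul_nonneg (abs_nonneg t) (abs_nonneg _)) zero_le_two
          calc ‖(A - B) * u + (B - 1) * (u - w)‖
              ≤ ‖(A - B) * u‖ + ‖(B - 1) * (u - w)‖ := norm_add_le _ _
            _ = ‖A - B‖ * ‖u‖ +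
                ‖B - 1‖ * ‖u - w‖ := by
                rw [norm_mul, norm_mul]
            _ ≤ min (|t| * |xi g x - xi g y|) 2 * Fu +
                min (|t| * ll g) 2 * (Mf * dB (proj g x) (proj g y)) := by
                have t1 : ‖A - B‖ * ‖u‖ ≤
                    min (|t| * |xi g x - xi g y|) 2 * Fu :=
                  mul_le_mul hAB habsu (norm_nonneg _) hmin0'
                have t2 : ‖B - 1‖ * ‖u - w‖ ≤
                    min (|t| * ll g) 2 * (Mf * dB (proj g x) (proj g y)) :=
                  mul_le_mul hB1 habsuw (norm_nonneg _) hmin0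
                linarith
            _ ≤ (3 * min (|t| * ll g) 2 * d + 10 * |t| * d) * Fu +
                min (|t| * ll g) 2 * (Mf * d) := by
                have t3 : min (|t| * |xi g x - xi g y|) 2 * Fu ≤
                    (3 * min (|t| * ll g) 2 * d + 10 * |t| * d) * Fu :=
                  mul_le_mul_of_nonneg_right hkey hFu
                have t4 : min (|t| * ll g) 2 * (Mf * dB (proj g x) (proj g y)) ≤
                    min (|t| * ll g) 2 * (Mf * d) :=
                  mul_le_mul_of_nonneg_left (mul_le_mul_of_nonneg_left hcontr hMf) hmin0
                linarith
            _ = (3 * Fu * d + Mf * d) * min (|t| * ll g) 2 + 10 * |t| * Fu * d := by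
                ring
    _ = ((3 * Fu + Mf) * epsT μ t + 10 * |t| * Fu) * d := by
        rw [integral_add (((integrable_minll t).const_mul _)) (integrable_const _),
          integral_const_mul, integral_const, ← epsT_eq hS]
        simp [measure_univ]
        ring

lemma pt_sup_bound (hS : μ {g : Mat q | memS g} = 1) {f : (Fin q → ℝ) → ℂ}
    (hf : memL f) {x : Fin q → ℝ} (hx : inBbar x) (t : ℝ) :
    ‖Ptop μ t f x‖ ≤ supnorm f := by
  rw [Ptop_eq]
  have := norm_integral_le_of_norm_le_const (μ := μ) (C := supnorm f)
    (f := fun g => Efac t g x * f (proj g x)) ?_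
  · simpa [measure_univ] using this
  · filter_upwards [ae_memS hS] with g hg
    rw [norm_mul,
      show ‖Efac t g x‖ = 1 from abs_exp_xi t g x, one_mul]
    exact abs_f_le_supnorm hf (proj_mem hg hx)

lemma pt_lip_bound (hS : μ {g : Mat q | memS g} = 1) {f : (Fin q → ℝ) → ℂ}
    (hf : memL f) (t : ℝ) {x y : Fin q → ℝ} (hx : inBbar x) (hy : inBbar y) :
    ‖Ptop μ t f x - Ptop μ t f y‖ ≤
      ((6 + 10 * |t|) * supnorm f + mlip f) * dB x y := by
  have hx1 := integrable_kernel' hS hf hx t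
  have hy1 := integrable_kernel' hS hf hy t
  set Fu := supnorm f
  set Mf := mlip f
  set d := dB x y with hd
  have hFu : 0 ≤ Fu := supnorm_nonneg f
  have hMf : 0 ≤ Mf := mlip_nonneg f
  have hd0 : 0 ≤ d := dB_nonneg hx hy
  rw [Ptop_eq, Ptop_eq, ← integral_sub hx1 hy1]
  calc ‖∫ g, (Efac t g x * f (proj g x) - Efac t g y * f (proj g y)) ∂μ‖
      ≤ ∫ g, ‖Efac t g x * f (proj g x) - Efac t g y * f (proj g y)‖ ∂μ :=
        norm_integral_le_integral_norm _
    _ ≤ ∫ g, (((6 + 10 * |t|) * Fu + Mf) * d) ∂μ := by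
        apply integral_mono_of_nonneg
        · filter_upwards with g using norm_nonneg _
        · exact integrable_const _
        · filter_upwards [ae_memS hS] with g hg
          have hpx := proj_mem hg hx
          have hpy := proj_mem hg hy
          set A := Efac t g x
          set B := Efac t g y
          set u := f (proj g x)
          set w := f (proj g y)
          have hdec : A * u - B * w = (A - B) * u + B * (u - w) := by ring
          rw [hdec]
          have habsu : ‖u‖ ≤ Fu := abs_f_le_supnorm hf hpx
          have habsuw : ‖u - w‖ ≤ Mf * dB (proj g x) (proj g y) :=
            abs_f_sub_le_mlip hf hpx hpy
          have hAB : ‖A - B‖ ≤ min (|t| * |xi g x - xi g y|) 2 :=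
            abs_Efac_sub_Efac t g x y
          have hB : ‖B‖ = 1 := abs_exp_xi t g y
          have hkey := key_min hg hx hy t
          have hcontr : dB (proj g x) (proj g y) ≤ d := dB_proj_le hg hx hy
          have hmin2 : min (|t| * ll g) 2 ≤ 2 := min_le_right _ _
          have hmin0' : (0:ℝ) ≤ min (|t| * |xi g x - xi g y|) 2 :=
            le_min (mul_nonneg (abs_nonneg t) (abs_nonneg _)) zero_le_two
          calc ‖(A - B) * u + B * (u - w)‖
              ≤ ‖(A - B) * u‖ + ‖B * (u - w)‖ := norm_add_le _ _
            _ = ‖A - B‖ * ‖u‖ +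
                ‖B‖ * ‖u - w‖ := by
                rw [norm_mul, norm_mul]
            _ ≤ min (|t| * |xi g x - xi g y|) 2 * Fu + Mf * dB (proj g x) (proj g y) := by
                have t1 := mul_le_mul hAB habsu (norm_nonneg _) hmin0'
                rw [hB, one_mul]
                linarith
            _ ≤ ((6 + 10 * |t|) * Fu + Mf) * d := by
                have hdle : dB (proj g x) (proj g y) ≤ d := hcontr
                have hdp0 : 0 ≤ dB (proj g x) (proj g y) := dB_nonneg hpx hpy
                have h6 : min (|t| * |xi g x - xi g y|) 2 ≤ (6 + 10 * |t|) * d := by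
                  have := hkey
                  nlinarith [hd0, abs_nonneg t,
                    le_min (mul_nonneg (abs_nonneg t) (ll_nonneg g)) zero_le_two]
                nlinarith
    _ = ((6 + 10 * |t|) * Fu + Mf) * d := by
        rw [integral_const]
        simp [measure_univ]
end NZ4
/-- **Theorem III.2.** Each Fourier kernel `P_t` is a bounded operator on `L`,
and `‖P_t − P‖_L ≤ 4 ε(t) + C'|t|` for a universal constant `C'`. -/
theorem statement14 :
    ∃ C' : ℝ, 0 < C' ∧
      ∀ (q : ℕ), 1 ≤ q → ∀ μ : Measure (Mat q), IsProbabilityMeasure μ →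
        μ {g : Mat q | memS g} = 1 →
        -- each `P_t` is a bounded operator of `L`
        (∀ (t : ℝ) (f : (Fin q → ℝ) → ℂ), memL f → memL (Ptop μ t f)) ∧
        (∀ t : ℝ, ∃ K : ℝ, 0 < K ∧ ∀ f : (Fin q → ℝ) → ℂ, memL f →
          normL (Ptop μ t f) ≤ K * normL f) ∧
        -- `‖P_t − P‖_L ≤ 4 ε(t) + C' |t|`
        (∀ (t : ℝ) (f : (Fin q → ℝ) → ℂ), memL f →
          normL (fun x => Ptop μ t f x - Ptop μ 0 f x)
            ≤ (4 * epsT μ t + C' * |t|) * normL f) := by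
  refine ⟨10, by norm_num, ?_⟩
  intro q hq μ hμ hS
  haveI : NeZero q := ⟨by omega⟩
  haveI := hμ
  refine ⟨?_, ?_, ?_⟩
  · -- `P_t` preserves `L`
    intro t f hf
    exact ⟨(6 + 10 * |t|) * supnorm f + mlip f, fun x y hx hy => pt_lip_bound hS hf t hx hy⟩
  · -- `P_t` is bounded on `L`
    intro t
    refine ⟨8 + 10 * |t|, by positivity, ?_⟩
    intro f hf
    have hFu := supnorm_nonneg f
    have hMf := mlip_nonneg f
    have h1 : supnorm (Ptop μ t f) ≤ supnorm f := by
      apply Real.sSup_le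
      · rintro r ⟨x, hx, rfl⟩
        exact pt_sup_bound hS hf hx t
      · exact hFu
    have h2 : mlip (Ptop μ t f) ≤ (6 + 10 * |t|) * supnorm f + mlip f := by
      apply Real.sSup_le
      · rintro r ⟨x, y, hx, hy, hxy, rfl⟩
        by_cases hd : dB x y = 0
        · rw [hd, div_zero]
          exact add_nonneg (mul_nonneg (by positivity) hFu) hMf
        · have hdpos : 0 < dB x y := lt_of_le_of_ne (dB_nonneg hx hy) (Ne.symm hd)
          rw [div_le_iff₀ hdpos]
          exact pt_lip_bound hS hf t hx hy
      · exact add_nonneg (mul_nonneg (by positivity) hFu) hMf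
    have hnl : normL (Ptop μ t f) = supnorm (Ptop μ t f) + mlip (Ptop μ t f) := rfl
    have hnf : normL f = supnorm f + mlip f := rfl
    rw [hnl, hnf]
    nlinarith [abs_nonneg t]
  · -- the quantitative bound for `P_t - P`
    intro t f hf
    have hFu := supnorm_nonneg f
    have hMf := mlip_nonneg f
    have hε : 0 ≤ epsT μ t := epsT_nonneg t
    have h1 : supnorm (fun x => Ptop μ t f x - Ptop μ 0 f x) ≤ supnorm f * epsT μ t := by
      apply Real.sSup_le
      · rintro r ⟨x, hx, rfl⟩
        exact sup_bound hS hf hx t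
      · exact mul_nonneg hFu hε
    have h2 : mlip (fun x => Ptop μ t f x - Ptop μ 0 f x) ≤
        (3 * supnorm f + mlip f) * epsT μ t + 10 * |t| * supnorm f := by
      apply Real.sSup_le
      · rintro r ⟨x, y, hx, hy, hxy, rfl⟩
        by_cases hd : dB x y = 0
        · rw [hd, div_zero]
          have : (0:ℝ) ≤ (3 * supnorm f + mlip f) * epsT μ t := by
            apply mul_nonneg _ hε
            nlinarith
          nlinarith [mul_nonneg (mul_nonneg (by norm_num : (0:ℝ) ≤ 10) (abs_nonneg t)) hFu]
        · have hdpos : 0 < dB x y := lt_of_le_of_ne (dB_nonneg hx hy) (Ne.symm hd)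
          rw [div_le_iff₀ hdpos]
          exact diff_bound hS hf t hx hy
      · have : (0:ℝ) ≤ (3 * supnorm f + mlip f) * epsT μ t := by
          apply mul_nonneg _ hε
          nlinarith
        nlinarith [mul_nonneg (mul_nonneg (by norm_num : (0:ℝ) ≤ 10) (abs_nonneg t)) hFu]
    have hnl : normL (fun x => Ptop μ t f x - Ptop μ 0 f x) =
        supnorm (fun x => Ptop μ t f x - Ptop μ 0 f x) +
        mlip (fun x => Ptop μ t f x - Ptop μ 0 f x) := rfl
    have hnf : normL f = supnorm f + mlip f := rfl
    rw [hnl, hnf]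
    nlinarith [mul_nonneg hε hMf, mul_nonneg (abs_nonneg t) hMf]

end StablePaper
end
end
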